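/- arXiv:1604.08657 — 8 statements merged into one kernel-verified Lean document; each statement's English description precedes it below -/
import Mathlib

section
/- Let X be a finite set of points in the plane in general position (no three collinear) such that every 4-element subset of X is in convex position. Then X is in convex position (i.e., every point of X is a vertex of the convex hull of X). -/
/-- Signed area determinant: positive iff `c` is to the left of the directed line `a → b`. -/
def det2 (a b c : ℝ × ℝ) : ℝ :=
  (b.1 - a.1) * (c.2 - a.2) - (b.2 - a.2) * (c.1 - a.1)

/-- A planar point set is in general position if no three of its points are collinear. -/
def GenPos (S : Set (ℝ × ℝ)) : Prop :=
  ∀ p ∈ S, ∀ q ∈ S, ∀ r ∈ S, p ≠ q → p ≠ r → q ≠ r →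
    ¬ Collinear ℝ ({p, q, r} : Set (ℝ × ℝ))

/-- A planar point set is in convex position if every point is a vertex of the convex hull,
i.e. no point lies in the convex hull of the others. -/
def ConvexPos (S : Set (ℝ × ℝ)) : Prop :=
  ∀ p ∈ S, p ∉ convexHull ℝ (S \ {p})

/-- If every 4 points of a finite planar point set in general position are in convex
position, then the whole set is in convex position. -/
theorem stmt_0 (X : Finset (ℝ × ℝ)) (hgp : GenPos (X : Set (ℝ × ℝ)))
    (h4 : ∀ Y ⊆ X, Y.card = 4 → ConvexPos (Y : Set (ℝ × ℝ))) :
    ConvexPos (X : Set (ℝ × ℝ)) := by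
  intro p hpX hp
  rw [convexHull_eq_union] at hp
  simp only [Set.mem_iUnion] at hp
  obtain ⟨t, hts, hai, hpt⟩ := hp
  have hcard : t.card ≤ 3 := by
    have h1 := hai.card_le_finrank_succ
    have hrange : Set.range (Subtype.val : {x // x ∈ t} → ℝ × ℝ) = (t : Set (ℝ × ℝ)) := by
      ext x; simp
    rw [hrange, Fintype.card_coe] at h1
    have h2 := Submodule.finrank_le (vectorSpan ℝ ((t : Set (ℝ × ℝ))))
    have h3 : Module.finrank ℝ (ℝ × ℝ) = 2 := by
      simp [Module.finrank_prod]
    have h4 : Fintype.card ↥(t : Set (ℝ × ℝ)) = t.card := by simp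
    omega
  have htX : ↑t ⊆ (X : Set (ℝ × ℝ)) \ {p} := hts
  have hpnt : p ∉ t := fun h => (htX h).2 rfl
  have htX' : t ⊆ X := fun x hx => ((htX hx).1 : _)
  interval_cases h : t.card
  · simp_all
  · obtain ⟨a, rfl⟩ := Finset.card_eq_one.mp h
    simp only [Finset.coe_singleton, convexHull_singleton, Set.mem_singleton_iff] at hpt
    exact hpnt (by simp [hpt])
  · obtain ⟨a, b, hab, rfl⟩ := Finset.card_eq_two.mp h
    have ha := htX (by simp : a ∈ (({a, b} : Finset (ℝ × ℝ)) : Set (ℝ × ℝ)))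
    have hb := htX (by simp : b ∈ (({a, b} : Finset (ℝ × ℝ)) : Set (ℝ × ℝ)))
    have hcol : Collinear ℝ ({p, a, b} : Set (ℝ × ℝ)) := by
      apply collinear_insert_of_mem_affineSpan_pair
      have : p ∈ convexHull ℝ ({a, b} : Set (ℝ × ℝ)) := by simpa using hpt
      exact (convexHull_subset_affineSpan _) this
    exact hgp p hpX a ha.1 b hb.1 (fun h => ha.2 h.symm) (fun h => hb.2 h.symm)
      hab hcol
  · have hY : (insert p t).card = 4 := by
      rw [Finset.card_insert_of_notMem hpnt, h]
    have hYX : insert p t ⊆ X := Finset.insert_subset hpX htX'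
    have := h4 (insert p t) hYX hY p (by simp)
    apply this
    have : ((insert p t : Finset (ℝ × ℝ)) : Set (ℝ × ℝ)) \ {p} = ↑t := by
      rw [Finset.coe_insert,
        Set.insert_diff_self_of_notMem (by simpa using hpnt)]
    rw [this]
    exact hpt
end

section
/- For every integer n ≥ 3, any set of C(2n-4, n-2) + 1 points in the plane in general position contains n points in convex position. -/
namespace ES
open List

def X (t : ℝ) (p : ℝ × ℝ) : ℝ := p.1 + t * p.2

/-- consecutive triples of `l` have `0 < s * det2`. -/
def SC (s : ℝ) (l : List (ℝ × ℝ)) : Prop :=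
  ∀ p q r : ℝ × ℝ, [p, q, r] <:+: l → 0 < s * det2 p q r

/-- all (not just consecutive) triples. -/
def AllS (s : ℝ) (l : List (ℝ × ℝ)) : Prop :=
  ∀ p q r : ℝ × ℝ, [p, q, r] <+ l → 0 < s * det2 p q r

/-- a cup, stored in *decreasing* `X t` order. -/
def Cup (t : ℝ) (P : Finset (ℝ × ℝ)) (a : ℕ) (l : List (ℝ × ℝ)) : Prop :=
  l.Chain' (fun p q => X t q < X t p) ∧ SC (-1) l ∧ (∀ x ∈ l, x ∈ P) ∧ l.length = a

/-- a cap, stored in increasing `X t` order. -/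
def Cap (t : ℝ) (P : Finset (ℝ × ℝ)) (b : ℕ) (l : List (ℝ × ℝ)) : Prop :=
  l.Chain' (fun p q => X t p < X t q) ∧ SC (-1) l ∧ (∀ x ∈ l, x ∈ P) ∧ l.length = b

lemma det2_cyc (a b c : ℝ × ℝ) : det2 a b c = det2 b c a := by unfold det2; ring
lemma det2_rev (a b c : ℝ × ℝ) : det2 c b a = -det2 a b c := by unfold det2; ring
lemma det2_swap (a b c : ℝ × ℝ) : det2 a c b = -det2 a b c := by unfold det2; ring
lemma det2_self₁ (a b : ℝ × ℝ) : det2 a b a = 0 := by unfold det2; ring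
lemma det2_self₂ (a b : ℝ × ℝ) : det2 a b b = 0 := by unfold det2; ring

lemma four {t s : ℝ} {a b c d : ℝ × ℝ} (hab : X t a < X t b) (hbc : X t b < X t c)
    (hcd : X t c < X t d) (h1 : 0 < s * det2 a b c) (h2 : 0 < s * det2 b c d) :
    0 < s * det2 a b d ∧ 0 < s * det2 a c d := by
  have k1 : s * det2 a b d * (X t c - X t b)
      = s * det2 a b c * (X t d - X t b) + s * det2 b c d * (X t b - X t a) := by
    unfold X det2; ring
  have k2 : s * det2 a c d * (X t c - X t b)
      = s * det2 a b c * (X t d - X t c) + s * det2 b c d * (X t c - X t a) := by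
    unfold X det2; ring
  have g1 : (0:ℝ) < X t d - X t b := by linarith
  have g2 : (0:ℝ) < X t b - X t a := by linarith
  have g3 : (0:ℝ) < X t d - X t c := by linarith
  have g4 : (0:ℝ) < X t c - X t a := by linarith
  have g5 : (0:ℝ) < X t c - X t b := by linarith
  constructor
  · nlinarith [mul_pos h1 g1, mul_pos h2 g2]
  · nlinarith [mul_pos h1 g3, mul_pos h2 g4]

lemma SC_tail {s : ℝ} {x : ℝ × ℝ} {l : List (ℝ × ℝ)} (h : SC s (x :: l)) : SC s l := by
  rintro p q r ⟨u, v, huv⟩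
  exact h p q r ⟨x :: u, v, by rw [cons_append, cons_append, huv]⟩

lemma SC_cons {s : ℝ} {p q r : ℝ × ℝ} {m : List (ℝ × ℝ)} (hd : 0 < s * det2 p q r)
    (h : SC s (q :: r :: m)) : SC s (p :: q :: r :: m) := by
  intro x y z hi
  rcases infix_cons_iff.mp hi with hpre | hinf
  · obtain ⟨rfl, h1⟩ := cons_prefix_cons.mp hpre
    obtain ⟨rfl, h2⟩ := cons_prefix_cons.mp h1
    obtain ⟨rfl, -⟩ := cons_prefix_cons.mp h2
    exact hd
  · exact h x y z hinf

lemma SC_pair {s : ℝ} {p q : ℝ × ℝ} : SC s [p, q] := by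
  intro x y z hi
  have := hi.length_le
  simp at this

lemma chain'_pw {α : Type*} {R : α → α → Prop} (tr : Transitive R) {l : List α}
    (h : Chain' R l) : Pairwise R l := by
  haveI : IsTrans α R := ⟨tr⟩
  exact isChain_iff_pairwise.mp h



lemma fan1 {t s : ℝ} : ∀ (l : List (ℝ × ℝ)) (a b : ℝ × ℝ),
    Pairwise (fun p q => X t p < X t q) (a :: b :: l) → SC s (a :: b :: l) →
    ∀ c ∈ l, 0 < s * det2 a b c := by
  intro l
  induction l with
  | nil => intro a b _ _ c hc; simp at hc
  | cons c l' ih =>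
    intro a b hpw hsc d hd
    have habc : 0 < s * det2 a b c := hsc a b c ⟨[], l', by simp⟩
    rcases mem_cons.mp hd with rfl | hd'
    · exact habc
    · obtain ⟨ha, hpw1⟩ := pairwise_cons.mp hpw
      obtain ⟨hb, hpw2⟩ := pairwise_cons.mp hpw1
      obtain ⟨hc, _⟩ := pairwise_cons.mp hpw2
      have h2 := ih b c hpw1 (SC_tail hsc) d hd'
      exact (four (ha b (by simp)) (hb c (by simp)) (hc d hd') habc h2).1

lemma fan2 {t s : ℝ} : ∀ (l : List (ℝ × ℝ)) (a : ℝ × ℝ),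
    Pairwise (fun p q => X t p < X t q) (a :: l) → SC s (a :: l) →
    ∀ p q : ℝ × ℝ, [p, q] <+ l → 0 < s * det2 a p q := by
  intro l
  induction l with
  | nil =>
    intro a _ _ p q h
    have := h.length_le; simp at this
  | cons b l' ih =>
    intro a hpw hsc p q hsub
    obtain ⟨ha, hpw1⟩ := pairwise_cons.mp hpw
    obtain ⟨hb, hpw2⟩ := pairwise_cons.mp hpw1
    rcases sublist_cons_iff.mp hsub with h' | ⟨r, heq, hr⟩
    · have hp : p ∈ l' := h'.subset (by simp)
      have hq' : 0 < s * det2 b p q := ih b hpw1 (SC_tail hsc) p q h'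
      have habp : 0 < s * det2 a b p := fan1 l' a b hpw hsc p hp
      have hpq : X t p < X t q := (pairwise_cons.mp (hpw2.sublist h')).1 q (by simp)
      exact (four (ha b (by simp)) (hb p hp) hpq habp hq').2
    · rcases List.cons_eq_cons.mp heq with ⟨rfl, rfl⟩
      exact fan1 l' a p hpw hsc q (singleton_sublist.mp hr)

lemma consec_all {t s : ℝ} : ∀ l : List (ℝ × ℝ),
    Pairwise (fun p q => X t p < X t q) l → SC s l → AllS s l := by
  intro l
  induction l with
  | nil =>
    intro _ _ p q r h
    have := h.length_le; simp at this
  | cons a l' ih =>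
    intro hpw hsc p q r hsub
    rcases sublist_cons_iff.mp hsub with h' | ⟨m, heq, hm⟩
    · exact ih hpw.of_cons (SC_tail hsc) p q r h'
    · rcases List.cons_eq_cons.mp heq with ⟨rfl, rfl⟩
      exact fan2 l' p hpw hsc q r hm

lemma SC_reverse {s : ℝ} {l : List (ℝ × ℝ)} (h : SC s l) : SC (-s) l.reverse := by
  intro p q r hi
  have h1 : [r, q, p] <:+: l := by
    have : ([r, q, p]).reverse <:+: l.reverse := by simpa using hi
    exact reverse_infix.mp this
  have := h r q p h1
  have hd : s * det2 r q p = -s * det2 p q r := by rw [det2_rev p q r]; ring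
  linarith



lemma collinear_of_det2_eq_zero {p q r : ℝ × ℝ} (hpq : p ≠ q) (h : det2 p q r = 0) :
    Collinear ℝ ({p, q, r} : Set (ℝ × ℝ)) := by
  rw [collinear_iff_of_mem (Set.mem_insert p {q, r})]
  refine ⟨q - p, ?_⟩
  intro x hx
  unfold det2 at h
  rcases hx with rfl | rfl | rfl
  · exact ⟨0, by simp⟩
  · exact ⟨1, by simp⟩
  · by_cases h1 : q.1 = p.1
    · have hq2 : q.2 - p.2 ≠ 0 := by
        intro hc
        exact hpq (Prod.ext h1 (by linarith)).symm
      refine ⟨(x.2 - p.2) / (q.2 - p.2), ?_⟩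
      have hx1 : x.1 = p.1 := by
        rw [h1] at h
        have h2 : (q.2 - p.2) * (x.1 - p.1) = 0 := by linarith
        rcases mul_eq_zero.mp h2 with h' | h'
        · exact absurd h' hq2
        · linarith
      have hgoal : x = (((x.2 - p.2) / (q.2 - p.2)) • (q - p)) + p := by
        have e1 : ((((x.2 - p.2) / (q.2 - p.2)) • (q - p)) + p).1
            = ((x.2 - p.2) / (q.2 - p.2)) * (q.1 - p.1) + p.1 := by simp
        have e2 : ((((x.2 - p.2) / (q.2 - p.2)) • (q - p)) + p).2
            = ((x.2 - p.2) / (q.2 - p.2)) * (q.2 - p.2) + p.2 := by simp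
        apply Prod.ext
        · rw [e1, h1, hx1]; ring
        · rw [e2]; field_simp; ring
      simpa using hgoal
    · have hq1 : q.1 - p.1 ≠ 0 := fun hc => h1 (by linarith)
      refine ⟨(x.1 - p.1) / (q.1 - p.1), ?_⟩
      have hgoal : x = (((x.1 - p.1) / (q.1 - p.1)) • (q - p)) + p := by
        have e1 : ((((x.1 - p.1) / (q.1 - p.1)) • (q - p)) + p).1
            = ((x.1 - p.1) / (q.1 - p.1)) * (q.1 - p.1) + p.1 := by simp
        have e2 : ((((x.1 - p.1) / (q.1 - p.1)) • (q - p)) + p).2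
            = ((x.1 - p.1) / (q.1 - p.1)) * (q.2 - p.2) + p.2 := by simp
        apply Prod.ext
        · rw [e1]; field_simp; ring
        · rw [e2]; field_simp
          nlinarith [h]
      simpa using hgoal

lemma cup_mono {t : ℝ} {P Q : Finset (ℝ × ℝ)} {a : ℕ} {l : List (ℝ × ℝ)}
    (h : Cup t P a l) (hPQ : P ⊆ Q) : Cup t Q a l :=
  ⟨h.1, h.2.1, fun x hx => hPQ (h.2.2.1 x hx), h.2.2.2⟩

lemma cap_mono {t : ℝ} {P Q : Finset (ℝ × ℝ)} {b : ℕ} {l : List (ℝ × ℝ)}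
    (h : Cap t P b l) (hPQ : P ⊆ Q) : Cap t Q b l :=
  ⟨h.1, h.2.1, fun x hx => hPQ (h.2.2.1 x hx), h.2.2.2⟩

lemma genpos_mono {S T : Set (ℝ × ℝ)} (h : GenPos S) (hTS : T ⊆ S) : GenPos T :=
  fun p hp q hq r hr => h p (hTS hp) q (hTS hq) r (hTS hr)

lemma extremal (t : ℝ) : ∀ N a b : ℕ, ∀ P : Finset (ℝ × ℝ), a + b ≤ N → 2 ≤ a → 2 ≤ b →
    Set.InjOn (X t) ↑P → GenPos ↑P → Nat.choose (a + b - 4) (a - 2) + 1 ≤ P.card →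
    (∃ l, Cup t P a l) ∨ (∃ l, Cap t P b l) := by
  intro N
  induction N with
  | zero => intro a b P hab ha _ _ _ _; omega
  | succ N ih =>
    intro a b P hab ha hb hinj hgp hcard
    by_cases ha2 : a = 2
    · -- any two points form a cup
      subst ha2
      have h2 : 2 ≤ P.card := by
        have : (2:ℕ) - 2 = 0 := rfl
        rw [this, Nat.choose_zero_right] at hcard
        omega
      obtain ⟨p, hp, q, hq, hne⟩ := Finset.one_lt_card.mp h2
      have hx : X t p ≠ X t q := fun hc => hne (hinj hp hq hc)
      rcases lt_or_gt_of_ne hx with hlt | hgt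
      · exact Or.inl ⟨[q, p], isChain_pair.mpr hlt, SC_pair, by
          intro x hx; rcases mem_cons.mp hx with rfl | hx' <;> simp_all, rfl⟩
      · exact Or.inl ⟨[p, q], isChain_pair.mpr hgt, SC_pair, by
          intro x hx; rcases mem_cons.mp hx with rfl | hx' <;> simp_all, rfl⟩
    by_cases hb2 : b = 2
    · subst hb2
      have h2 : 2 ≤ P.card := by
        have he : a + 2 - 4 = a - 2 := by omega
        rw [he, Nat.choose_self] at hcard
        omega
      obtain ⟨p, hp, q, hq, hne⟩ := Finset.one_lt_card.mp h2
      have hx : X t p ≠ X t q := fun hc => hne (hinj hp hq hc)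
      rcases lt_or_gt_of_ne hx with hlt | hgt
      · exact Or.inr ⟨[p, q], isChain_pair.mpr hlt, SC_pair, by
          intro x hx; rcases mem_cons.mp hx with rfl | hx' <;> simp_all, rfl⟩
      · exact Or.inr ⟨[q, p], isChain_pair.mpr hgt, SC_pair, by
          intro x hx; rcases mem_cons.mp hx with rfl | hx' <;> simp_all, rfl⟩
    obtain ⟨a', rfl⟩ : ∃ a', a = a' + 3 := ⟨a - 3, by omega⟩
    obtain ⟨b', rfl⟩ : ∃ b', b = b' + 3 := ⟨b - 3, by omega⟩
    by_cases hcup : ∃ l, Cup t P (a' + 3) l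
    · exact Or.inl hcup
    by_cases hcap : ∃ l, Cap t P (b' + 3) l
    · exact Or.inr hcap
    exfalso
    classical
    set E := P.filter (fun p => ∃ l, Cup t P (a' + 2) (p :: l)) with hE
    have hEP : E ⊆ P := Finset.filter_subset _ _
    have hPEsub : P \ E ⊆ P := Finset.sdiff_subset
    -- no (a'+2)-cup and no (b'+3)-cap inside P \ E
    have hPE : ¬ ((∃ l, Cup t (P \ E) (a' + 2) l) ∨ ∃ l, Cap t (P \ E) (b' + 3) l) := by
      rintro (⟨l, hl⟩ | ⟨l, hl⟩)
      · obtain ⟨p, m, rfl⟩ : ∃ p m, l = p :: m := by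
          rcases l with - | ⟨p, m⟩
          · exact absurd hl.2.2.2 (by simp)
          · exact ⟨p, m, rfl⟩
        have hpPE : p ∈ P \ E := hl.2.2.1 p (by simp)
        have hpE : p ∈ E := by
          rw [hE, Finset.mem_filter]
          exact ⟨(Finset.mem_sdiff.mp hpPE).1, ⟨m, cup_mono hl hPEsub⟩⟩
        exact (Finset.mem_sdiff.mp hpPE).2 hpE
      · exact hcap ⟨l, cap_mono hl hPEsub⟩
    have hcoe : (↑(P \ E) : Set (ℝ × ℝ)) ⊆ ↑P := by
      intro x hx; exact hPEsub hx
    have h1 : (P \ E).card ≤ Nat.choose (a' + b' + 1) a' := by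
      by_contra hcon
      push_neg at hcon
      refine hPE (ih (a' + 2) (b' + 3) (P \ E) (by omega) (by omega) (by omega)
        (hinj.mono hcoe) (genpos_mono hgp hcoe) ?_)
      have : (a' + 2) + (b' + 3) - 4 = a' + b' + 1 := by omega
      rw [this]
      have : (a' + 2) - 2 = a' := by omega
      rw [this]
      omega
    have hsd : (P \ E).card = P.card - E.card := Finset.card_sdiff_of_subset hEP
    have hEle : E.card ≤ P.card := Finset.card_le_card hEP
    have pascal : Nat.choose (a' + b' + 2) (a' + 1)
        = Nat.choose (a' + b' + 1) a' + Nat.choose (a' + b' + 1) (a' + 1) :=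
      Nat.choose_succ_succ (a' + b' + 1) a'
    have hcard' : Nat.choose (a' + b' + 2) (a' + 1) + 1 ≤ P.card := by
      have h4 : (a' + 3) + (b' + 3) - 4 = a' + b' + 2 := by omega
      have h5 : (a' + 3) - 2 = a' + 1 := by omega
      rwa [h4, h5] at hcard
    have hEcard : Nat.choose (a' + b' + 1) (a' + 1) + 1 ≤ E.card := by omega
    have hEcoe : (↑E : Set (ℝ × ℝ)) ⊆ ↑P := fun x hx => hEP hx
    rcases ih (a' + 3) (b' + 2) E (by omega) (by omega) (by omega) (hinj.mono hEcoe)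
        (genpos_mono hgp hEcoe) (by
          have h4 : (a' + 3) + (b' + 2) - 4 = a' + b' + 1 := by omega
          have h5 : (a' + 3) - 2 = a' + 1 := by omega
          rw [h4, h5]; exact hEcard) with hcupE | hcapE
    · obtain ⟨l, hl⟩ := hcupE
      exact hcup ⟨l, cup_mono hl hEP⟩
    · obtain ⟨K, hK⟩ := hcapE
      obtain ⟨q, r, m, rfl⟩ : ∃ q r m, K = q :: r :: m := by
        rcases K with - | ⟨q, K'⟩
        · exact absurd hK.2.2.2 (by simp)
        rcases K' with - | ⟨r, m⟩
        · exact absurd hK.2.2.2 (by simp)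
        exact ⟨q, r, m, rfl⟩
      have hqE : q ∈ E := hK.2.2.1 q (by simp)
      rw [hE, Finset.mem_filter] at hqE
      obtain ⟨hqP, C, hC⟩ := hqE
      obtain ⟨p, m', rfl⟩ : ∃ p m', C = p :: m' := by
        rcases C with - | ⟨p, m'⟩
        · exact absurd hC.2.2.2 (by simp)
        exact ⟨p, m', rfl⟩
      have hpq : X t p < X t q := (isChain_cons_cons.mp hC.1).1
      have hqr : X t q < X t r := (isChain_cons_cons.mp hK.1).1
      have hpr : X t p < X t r := lt_trans hpq hqr
      have hpP : p ∈ P := hC.2.2.1 p (by simp)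
      have hrP : r ∈ P := hEP (hK.2.2.1 r (by simp))
      have hpqne : p ≠ q := fun h => by rw [h] at hpq; exact lt_irrefl _ hpq
      have hprne : p ≠ r := fun h => by rw [h] at hpr; exact lt_irrefl _ hpr
      have hqrne : q ≠ r := fun h => by rw [h] at hqr; exact lt_irrefl _ hqr
      have hdet : det2 p q r ≠ 0 := by
        intro h0
        exact hgp p (Finset.mem_coe.mpr hpP) q (Finset.mem_coe.mpr hqP) r
          (Finset.mem_coe.mpr hrP) hpqne hprne hqrne (collinear_of_det2_eq_zero hpqne h0)
      rcases lt_or_gt_of_ne hdet with hneg | hpos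
      · refine hcap ⟨p :: q :: r :: m, isChain_cons_cons.mpr ⟨hpq, hK.1⟩,
          SC_cons (by linarith) hK.2.1, ?_, ?_⟩
        · intro x hx
          rcases mem_cons.mp hx with rfl | hx'
          · exact hpP
          · exact hEP (hK.2.2.1 x hx')
        · have := hK.2.2.2
          simp only [length_cons] at this ⊢
          omega
      · refine hcup ⟨r :: q :: p :: m', isChain_cons_cons.mpr ⟨hqr, hC.1⟩, SC_cons ?_ hC.2.1, ?_, ?_⟩
        · have hrev : det2 r q p = -det2 p q r := det2_rev p q r
          linarith [hrev]
        · intro x hx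
          rcases mem_cons.mp hx with rfl | hx'
          · exact hrP
          · exact hC.2.2.1 x hx'
        · have := hC.2.2.2
          simp only [length_cons] at this ⊢
          omega



lemma isLin (c1 c2 : ℝ) : IsLinearMap ℝ (fun q : ℝ × ℝ => c1 * q.1 + c2 * q.2) := by
  constructor
  · intro p q; simp; ring
  · intro c p; simp; ring

lemma not_mem_hull_ge {S : Set (ℝ × ℝ)} {p : ℝ × ℝ} (c1 c2 r : ℝ)
    (hS : ∀ x ∈ S, r ≤ c1 * x.1 + c2 * x.2) (hp : c1 * p.1 + c2 * p.2 < r) :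
    p ∉ convexHull ℝ S := fun hmem =>
  absurd (convexHull_min hS (convex_halfSpace_ge (isLin c1 c2) r) hmem) (not_le.2 hp)

lemma not_mem_hull_gt {S : Set (ℝ × ℝ)} {p : ℝ × ℝ} (c1 c2 r : ℝ)
    (hS : ∀ x ∈ S, r < c1 * x.1 + c2 * x.2) (hp : c1 * p.1 + c2 * p.2 ≤ r) :
    p ∉ convexHull ℝ S := fun hmem =>
  absurd (convexHull_min hS (convex_halfSpace_gt (isLin c1 c2) r) hmem) (not_lt.2 hp)

lemma convexPos_of_allS {t s : ℝ} (l : List (ℝ × ℝ))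
    (hch : l.Chain' (fun p q => X t p < X t q)) (hall : AllS s l) :
    ConvexPos (l.toFinset : Set (ℝ × ℝ)) := by
  have hpw : Pairwise (fun p q => X t p < X t q) l :=
    chain'_pw (R := fun p q : ℝ × ℝ => X t p < X t q)
      (fun _ _ _ h1 h2 => lt_trans h1 h2) hch
  intro p hp
  have hpl : p ∈ l := by simpa using hp
  obtain ⟨l₁, l₂, rfl⟩ := append_of_mem hpl
  have hsetmem : ∀ x : ℝ × ℝ, x ∈ (((l₁ ++ p :: l₂).toFinset : Set (ℝ × ℝ)) \ {p}) →
      (x ∈ l₁ ∨ x ∈ l₂) ∧ x ≠ p := by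
    intro x hx
    obtain ⟨hx1, hx2⟩ := hx
    have hx1' : x ∈ l₁ ++ p :: l₂ := mem_toFinset.mp (Finset.mem_coe.mp hx1)
    rcases mem_append.mp hx1' with h | h
    · exact ⟨Or.inl h, hx2⟩
    · rcases mem_cons.mp h with rfl | h'
      · exact absurd rfl hx2
      · exact ⟨Or.inr h', hx2⟩
  obtain ⟨hpw1, hpw2, hpw3⟩ :
      Pairwise _ l₁ ∧ Pairwise _ (p :: l₂) ∧
        ∀ x ∈ l₁, ∀ y ∈ p :: l₂, X t x < X t y := pairwise_append.mp hpw
  rcases eq_nil_or_concat l₁ with rfl | ⟨L, u, hLu⟩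
  · -- p is the first point; use halfspace X t p < X t x
    apply not_mem_hull_gt 1 t (X t p)
    · intro x hx
      obtain ⟨hmem, hne⟩ := hsetmem x hx
      rcases hmem with h | h
      · simp at h
      · have : X t p < X t x := (pairwise_cons.mp hpw2).1 x h
        unfold X at this ⊢
        linarith
    · unfold X; linarith
  rw [List.concat_eq_append] at hLu
  subst hLu
  rcases l₂ with - | ⟨v, m₂⟩
  · -- p is the last point
    apply not_mem_hull_gt (-1) (-t) (-(X t p))
    · intro x hx
      obtain ⟨hmem, hne⟩ := hsetmem x hx
      rcases hmem with h | h
      · have : X t x < X t p := hpw3 x h p (by simp)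
        unfold X at this ⊢
        linarith
      · simp at h
    · unfold X; linarith
  · -- interior point: u immediately before, v immediately after
    apply not_mem_hull_ge (-(s * (v.2 - u.2))) (s * (v.1 - u.1))
      (-(s * (v.2 - u.2)) * u.1 + s * (v.1 - u.1) * u.2)
    · intro x hx
      obtain ⟨hmem, hne⟩ := hsetmem x hx
      have key : ∀ y : ℝ × ℝ, 0 ≤ s * det2 u v y →
          -(s * (v.2 - u.2)) * u.1 + s * (v.1 - u.1) * u.2
            ≤ -(s * (v.2 - u.2)) * y.1 + s * (v.1 - u.1) * y.2 := by
        intro y hy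
        unfold det2 at hy
        nlinarith [hy]
      rcases hmem with h | h
      · rcases mem_append.mp h with h' | h'
        · -- x strictly before u : triple (x, u, v)
          have hsub : [x, u, v] <+ (L ++ [u]) ++ p :: v :: m₂ := by
            have s1 : [x, u] <+ L ++ [u] :=
              Sublist.append (singleton_sublist.mpr h') (Sublist.refl [u])
            have s2 : [v] <+ p :: v :: m₂ := by simp
            simpa using Sublist.append s1 s2
          have := hall x u v hsub
          apply key
          have e : det2 u v x = det2 x u v := by rw [det2_cyc x u v, det2_cyc u v x]
          linarith [e ▸ this]
        · -- x = u
          have hxu : x = u := by simpa using h'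
          subst hxu
          apply key
          rw [det2_self₁]; simp
      · rcases mem_cons.mp h with rfl | h'
        · -- x = v
          apply key
          rw [det2_self₂]; simp
        · -- x strictly after v : triple (u, v, x)
          have hsub : [u, v, x] <+ (L ++ [u]) ++ p :: v :: m₂ := by
            have s1 : [u] <+ L ++ [u] := by simp
            have s2 : [v, x] <+ p :: v :: m₂ :=
              Sublist.cons p (Sublist.cons₂ v (singleton_sublist.mpr h'))
            simpa using Sublist.append s1 s2
          have := hall u v x hsub
          apply key
          linarith
    · -- p itself is strictly below the line through u and v
      have hsub : [u, p, v] <+ (L ++ [u]) ++ p :: v :: m₂ := by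
        have s1 : [u] <+ L ++ [u] := by simp
        have s2 : [p, v] <+ p :: v :: m₂ :=
          Sublist.cons₂ p (Sublist.cons₂ v (nil_sublist m₂))
        simpa using Sublist.append s1 s2
      have hupv := hall u p v hsub
      have e : det2 u v p = -det2 u p v := det2_swap u p v
      have : s * det2 u v p < 0 := by
        have : s * det2 u v p = -(s * det2 u p v) := by rw [e]; ring
        linarith
      unfold det2 at this
      nlinarith [this]



lemma nodup_of_pw_lt {t : ℝ} {l : List (ℝ × ℝ)}
    (h : Pairwise (fun p q => X t p < X t q) l) : l.Nodup :=
  h.imp fun {a b} hab => fun he => by rw [he] at hab; exact lt_irrefl _ hab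

lemma nodup_of_pw_gt {t : ℝ} {l : List (ℝ × ℝ)}
    (h : Pairwise (fun p q => X t q < X t p) l) : l.Nodup :=
  h.imp fun {a b} hab => fun he => by rw [he] at hab; exact lt_irrefl _ hab

end ES

/-- Erdős–Szekeres: any C(2n-4, n-2) + 1 points in general position contain
n points in convex position. -/
theorem stmt_1 (n : ℕ) (hn : 3 ≤ n) (P : Finset (ℝ × ℝ))
    (hcard : P.card = Nat.choose (2 * n - 4) (n - 2) + 1)
    (hgp : GenPos (P : Set (ℝ × ℝ))) :
    ∃ S ⊆ P, S.card = n ∧ ConvexPos (S : Set (ℝ × ℝ)) := by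
  classical
  set T : Finset ℝ :=
    (P ×ˢ P).image (fun pq : (ℝ × ℝ) × (ℝ × ℝ) => (pq.2.1 - pq.1.1) / (pq.1.2 - pq.2.2)) with hT
  obtain ⟨t, ht⟩ := Infinite.exists_notMem_finset T
  have hinj : Set.InjOn (ES.X t) ↑P := by
    intro p hp q hq h
    unfold ES.X at h
    by_cases h2 : p.2 = q.2
    · have h1 : p.1 = q.1 := by rw [h2] at h; linarith
      exact Prod.ext h1 h2
    · exfalso
      apply ht
      rw [hT]
      apply Finset.mem_image.mpr
      refine ⟨(p, q), Finset.mem_product.mpr ⟨Finset.mem_coe.mp hp, Finset.mem_coe.mp hq⟩, ?_⟩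
      have hd : p.2 - q.2 ≠ 0 := fun hc => h2 (by linarith)
      field_simp
      linarith
  have hmain := ES.extremal t (2 * n) n n P (by omega) (by omega) (by omega) hinj hgp
    (by rw [show n + n - 4 = 2 * n - 4 from by omega, hcard])
  rcases hmain with ⟨l, hch, hsc, hmem, hlen⟩ | ⟨l, hch, hsc, hmem, hlen⟩
  · -- cup (stored decreasing): reverse it
    have hpwd : List.Pairwise (fun p q => ES.X t q < ES.X t p) l :=
      ES.chain'_pw (R := fun p q : ℝ × ℝ => ES.X t q < ES.X t p)
        (fun _ _ _ h1 h2 => lt_trans h2 h1) hch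
    have hnd : l.Nodup := ES.nodup_of_pw_gt hpwd
    refine ⟨l.toFinset, ?_, ?_, ?_⟩
    · intro x hx; exact hmem x (List.mem_toFinset.mp hx)
    · rw [List.toFinset_card_of_nodup hnd, hlen]
    · have hch' : l.reverse.Chain' (fun p q => ES.X t p < ES.X t q) :=
        (List.isChain_reverse (R := fun p q : ℝ × ℝ => ES.X t p < ES.X t q)).mpr hch
      have hsc' : ES.SC 1 l.reverse := by
        have := ES.SC_reverse hsc
        norm_num at this
        exact this
      have hpw' : List.Pairwise (fun p q => ES.X t p < ES.X t q) l.reverse :=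
        ES.chain'_pw (R := fun p q : ℝ × ℝ => ES.X t p < ES.X t q)
          (fun _ _ _ h1 h2 => lt_trans h1 h2) hch'
      have hall : ES.AllS 1 l.reverse := ES.consec_all l.reverse hpw' hsc'
      have := ES.convexPos_of_allS (s := 1) l.reverse hch' hall
      rwa [List.toFinset_reverse] at this
  · -- cap (stored increasing)
    have hpw : List.Pairwise (fun p q => ES.X t p < ES.X t q) l :=
      ES.chain'_pw (R := fun p q : ℝ × ℝ => ES.X t p < ES.X t q)
        (fun _ _ _ h1 h2 => lt_trans h1 h2) hch
    have hnd : l.Nodup := ES.nodup_of_pw_lt hpw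
    refine ⟨l.toFinset, ?_, ?_, ?_⟩
    · intro x hx; exact hmem x (List.mem_toFinset.mp hx)
    · rw [List.toFinset_card_of_nodup hnd, hlen]
    · exact ES.convexPos_of_allS (s := -1) l hch (ES.consec_all l hpw hsc)
end

section
/- Let k, ℓ ≥ 2. Any set of C(k+ℓ-4, k-2) + 1 points in the plane in general position, with all x-coordinates distinct, contains a k-cup or an ℓ-cap. -/
/-- Slope of the segment from `p` to `q`. -/
noncomputable def slope2 (p q : ℝ × ℝ) : ℝ := (q.2 - p.2) / (q.1 - p.1)

/-- `f 0, …, f (m-1)` is an m-cup: x-coordinates strictly increasing and slopes of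
consecutive segments strictly increasing. -/
def IsCupSeq (m : ℕ) (f : ℕ → ℝ × ℝ) : Prop :=
  (∀ i j, i < j → j < m → (f i).1 < (f j).1) ∧
  (∀ i, i + 2 < m → slope2 (f i) (f (i + 1)) < slope2 (f (i + 1)) (f (i + 2)))

/-- `f 0, …, f (m-1)` is an m-cap: x-coordinates strictly increasing and slopes of
consecutive segments strictly decreasing. -/
def IsCapSeq (m : ℕ) (f : ℕ → ℝ × ℝ) : Prop :=
  (∀ i j, i < j → j < m → (f i).1 < (f j).1) ∧
  (∀ i, i + 2 < m → slope2 (f (i + 1)) (f (i + 2)) < slope2 (f i) (f (i + 1)))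

lemma xmono (m : ℕ) (f : ℕ → ℝ × ℝ)
    (h : ∀ i, i + 1 < m → (f i).1 < (f (i + 1)).1) :
    ∀ i j, i < j → j < m → (f i).1 < (f j).1 := by
  intro i j hij hjm
  induction j with
  | zero => omega
  | succ j ih =>
    rcases Nat.lt_succ_iff_lt_or_eq.mp hij with h' | h'
    · exact lt_trans (ih h' (by omega)) (h j hjm)
    · subst h'; exact h i hjm

lemma slope_ne (p q r : ℝ × ℝ) (hpq : p.1 < q.1) (hqr : q.1 < r.1)
    (hcol : ¬ Collinear ℝ ({p, q, r} : Set (ℝ × ℝ))) :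
    slope2 p q ≠ slope2 q r := by
  intro h
  apply hcol
  have ha : q.1 - p.1 ≠ 0 := by linarith
  have hb : r.1 - q.1 ≠ 0 := by linarith
  have hcross : (q.2 - p.2) * (r.1 - q.1) = (r.2 - q.2) * (q.1 - p.1) := by
    have := (div_eq_div_iff ha hb).mp h
    linarith
  rw [collinear_iff_exists_forall_eq_smul_vadd]
  refine ⟨p, q - p, ?_⟩
  intro x hx
  rcases hx with rfl | rfl | rfl
  · exact ⟨0, by simp⟩
  · exact ⟨1, by simp⟩
  · refine ⟨(x.1 - p.1) / (q.1 - p.1), ?_⟩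
    have h1 : (x.1 - p.1) / (q.1 - p.1) * (q.1 - p.1) = x.1 - p.1 := by
      field_simp
    have h2 : (x.1 - p.1) * (q.2 - p.2) = (x.2 - p.2) * (q.1 - p.1) := by nlinarith
    have h3 : (x.1 - p.1) / (q.1 - p.1) * (q.2 - p.2) = x.2 - p.2 := by
      rw [div_mul_eq_mul_div, h2, mul_div_assoc, div_self ha, mul_one]
    apply Prod.ext <;> simp [Prod.smul_def, h1, h3]

lemma cup_append (m : ℕ) (f : ℕ → ℝ × ℝ) (hf : IsCupSeq m f) (q : ℝ × ℝ)
    (hm : 2 ≤ m)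
    (hxq : (f (m - 1)).1 < q.1)
    (hs : slope2 (f (m - 2)) (f (m - 1)) < slope2 (f (m - 1)) q) :
    IsCupSeq (m + 1) (fun i => if i < m then f i else q) := by
  constructor
  · apply xmono
    intro i hi
    by_cases h1 : i + 1 < m
    · simp only [if_pos (by omega : i < m), if_pos h1]
      exact hf.1 i (i + 1) (by omega) h1
    · have hieq : i = m - 1 := by omega
      subst hieq
      simp only [if_pos (by omega : m - 1 < m), if_neg (by omega : ¬ (m - 1 + 1 < m))]
      exact hxq
  · intro i hi
    by_cases h1 : i + 2 < m
    · simp only [if_pos (by omega : i < m), if_pos (by omega : i + 1 < m), if_pos h1]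
      exact hf.2 i h1
    · have hieq : i = m - 2 := by omega
      subst hieq
      have e1 : m - 2 + 1 = m - 1 := by omega
      simp only [e1, if_pos (by omega : m - 2 < m), if_pos (by omega : m - 1 < m),
        if_neg (by omega : ¬ (m - 2 + 2 < m))]
      exact hs

lemma cap_prepend (m : ℕ) (f : ℕ → ℝ × ℝ) (hf : IsCapSeq m f) (p : ℝ × ℝ)
    (hm : 2 ≤ m)
    (hxp : p.1 < (f 0).1)
    (hs : slope2 (f 0) (f 1) < slope2 p (f 0)) :
    IsCapSeq (m + 1) (fun i => if i = 0 then p else f (i - 1)) := by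
  constructor
  · apply xmono
    intro i hi
    match i with
    | 0 => simpa using hxp
    | Nat.succ j =>
      simp only [if_neg (Nat.succ_ne_zero j), if_neg (Nat.succ_ne_zero (j+1)),
        Nat.succ_sub_one]
      exact hf.1 j (j + 1) (by omega) (by omega)
  · intro i hi
    match i with
    | 0 => simpa using hs
    | Nat.succ j =>
      simp only [if_neg (Nat.succ_ne_zero j), if_neg (Nat.succ_ne_zero (j+1)),
        if_neg (Nat.succ_ne_zero (j+2)), Nat.succ_sub_one]
      exact hf.2 j (by omega)

lemma cupcap : ∀ n k l : ℕ, k + l ≤ n → 2 ≤ k → 2 ≤ l →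
    ∀ P : Finset (ℝ × ℝ), Nat.choose (k + l - 4) (k - 2) + 1 ≤ P.card →
    GenPos (P : Set (ℝ × ℝ)) → (∀ p ∈ P, ∀ q ∈ P, p ≠ q → p.1 ≠ q.1) →
    (∃ f : ℕ → ℝ × ℝ, (∀ i < k, f i ∈ P) ∧ IsCupSeq k f) ∨
    (∃ f : ℕ → ℝ × ℝ, (∀ i < l, f i ∈ P) ∧ IsCapSeq l f) := by
  intro n
  induction n with
  | zero => intro k l h hk hl; omega
  | succ n ih =>
    intro k l hn hk hl P hcard hgp hx
    have hcard2 : 1 < P.card := by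
      have := Nat.choose_pos (by omega : k - 2 ≤ k + l - 4)
      omega
    obtain ⟨p, hp, q, hq, hpq⟩ := Finset.one_lt_card.mp hcard2
    by_cases hk2 : k = 2
    · left
      subst hk2
      rcases lt_or_gt_of_ne (hx p hp q hq hpq) with h | h
      · refine ⟨fun i => if i = 0 then p else q, ?_, ?_, ?_⟩
        · intro i hi; dsimp only; split <;> assumption
        · intro i j hij hj
          have : i = 0 ∧ j = 1 := by omega
          obtain ⟨rfl, rfl⟩ := this
          simpa using h
        · intro i hi; omega
      · refine ⟨fun i => if i = 0 then q else p, ?_, ?_, ?_⟩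
        · intro i hi; dsimp only; split <;> assumption
        · intro i j hij hj
          have : i = 0 ∧ j = 1 := by omega
          obtain ⟨rfl, rfl⟩ := this
          simpa using h
        · intro i hi; omega
    by_cases hl2 : l = 2
    · right
      subst hl2
      rcases lt_or_gt_of_ne (hx p hp q hq hpq) with h | h
      · refine ⟨fun i => if i = 0 then p else q, ?_, ?_, ?_⟩
        · intro i hi; dsimp only; split <;> assumption
        · intro i j hij hj
          have : i = 0 ∧ j = 1 := by omega
          obtain ⟨rfl, rfl⟩ := this
          simpa using h
        · intro i hi; omega
      · refine ⟨fun i => if i = 0 then q else p, ?_, ?_, ?_⟩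
        · intro i hi; dsimp only; split <;> assumption
        · intro i j hij hj
          have : i = 0 ∧ j = 1 := by omega
          obtain ⟨rfl, rfl⟩ := this
          simpa using h
        · intro i hi; omega
    have hk3 : 3 ≤ k := by omega
    have hl3 : 3 ≤ l := by omega
    classical
    set pr := fun p : ℝ × ℝ =>
      ∃ f : ℕ → ℝ × ℝ, (∀ i < k - 1, f i ∈ P) ∧ IsCupSeq (k - 1) f ∧ f (k - 2) = p with hpr
    set E := P.filter pr with hE
    set D := P.filter (fun p => ¬ pr p) with hD
    have hEP : E ⊆ P := Finset.filter_subset _ _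
    have hDP : D ⊆ P := Finset.filter_subset _ _
    have hEDcard : E.card + D.card = P.card :=
      Finset.card_filter_add_card_filter_not (p := pr)
    have hpas : (k + l - 4).choose (k - 2)
        = (k + l - 5).choose (k - 3) + (k + l - 5).choose (k - 2) := by
      have e1 : k + l - 4 = (k + l - 5) + 1 := by omega
      have e2 : k - 2 = (k - 3) + 1 := by omega
      rw [e1, e2, Nat.choose_succ_succ]
    by_cases hDbig : (k + l - 5).choose (k - 3) + 1 ≤ D.card
    · have hgpD : GenPos (D : Set (ℝ × ℝ)) := by
        intro a ha b hb c hc h1 h2 h3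
        exact hgp a (hDP (Finset.mem_coe.mp ha)) b (hDP (Finset.mem_coe.mp hb))
          c (hDP (Finset.mem_coe.mp hc)) h1 h2 h3
      have hxD : ∀ a ∈ D, ∀ b ∈ D, a ≠ b → a.1 ≠ b.1 :=
        fun a ha b hb => hx a (hDP ha) b (hDP hb)
      have hcd : ((k - 1) + l - 4).choose ((k - 1) - 2) + 1 ≤ D.card := by
        have e : ((k - 1) + l - 4).choose ((k - 1) - 2)
            = (k + l - 5).choose (k - 3) := by congr 1 <;> omega
        rw [e]; exact hDbig
      rcases ih (k - 1) l (by omega) (by omega) hl D hcd hgpD hxD with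
        ⟨f, hf, hcup⟩ | ⟨f, hf, hcap⟩
      · exfalso
        have hmem := hf (k - 2) (by omega)
        have hpred : pr (f (k - 2)) := ⟨f, fun i hi => hDP (hf i hi), hcup, rfl⟩
        exact (Finset.mem_filter.mp hmem).2 hpred
      · exact Or.inr ⟨f, fun i hi => hDP (hf i hi), hcap⟩
    · have hcard' : (k + l - 5).choose (k - 3) + (k + l - 5).choose (k - 2) + 1 ≤ P.card := by
        rw [hpas] at hcard; exact hcard
      have hEbig : (k + (l - 1) - 4).choose (k - 2) + 1 ≤ E.card := by
        have e : k + (l - 1) - 4 = k + l - 5 := by omega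
        rw [e]; omega
      have hgpE : GenPos (E : Set (ℝ × ℝ)) := by
        intro a ha b hb c hc h1 h2 h3
        exact hgp a (hEP (Finset.mem_coe.mp ha)) b (hEP (Finset.mem_coe.mp hb))
          c (hEP (Finset.mem_coe.mp hc)) h1 h2 h3
      have hxE : ∀ a ∈ E, ∀ b ∈ E, a ≠ b → a.1 ≠ b.1 :=
        fun a ha b hb => hx a (hEP ha) b (hEP hb)
      rcases ih k (l - 1) (by omega) hk (by omega) E hEbig hgpE hxE with
        ⟨f, hf, hcup⟩ | ⟨g, hg, hcap⟩
      · exact Or.inl ⟨f, fun i hi => hEP (hf i hi), hcup⟩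
      · have hg0 : g 0 ∈ E := hg 0 (by omega)
        obtain ⟨c, hcP, hcup, hce⟩ := (Finset.mem_filter.mp hg0).2
        have hx01 : (c (k - 3)).1 < (c (k - 2)).1 :=
          hcup.1 (k - 3) (k - 2) (by omega) (by omega)
        have hx12 : (g 0).1 < (g 1).1 := hcap.1 0 1 (by omega) (by omega)
        have hc3P : c (k - 3) ∈ P := hcP (k - 3) (by omega)
        have hc2P : c (k - 2) ∈ P := hcP (k - 2) (by omega)
        have hg1P : g 1 ∈ P := hEP (hg 1 (by omega))
        have hx12' : (c (k - 2)).1 < (g 1).1 := by rw [hce]; exact hx12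
        have hne01 : c (k - 3) ≠ c (k - 2) := by
          intro h; rw [h] at hx01; exact lt_irrefl _ hx01
        have hne12 : c (k - 2) ≠ g 1 := by
          intro h; rw [h] at hx12'; exact lt_irrefl _ hx12'
        have hne02 : c (k - 3) ≠ g 1 := by
          intro h
          have : (c (k - 3)).1 < (g 1).1 := lt_trans hx01 hx12'
          rw [h] at this; exact lt_irrefl _ this
        have hnc := hgp (c (k - 3)) (Finset.mem_coe.mpr hc3P)
          (c (k - 2)) (Finset.mem_coe.mpr hc2P) (g 1) (Finset.mem_coe.mpr hg1P)
          hne01 hne02 hne12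
        have hsne := slope_ne (c (k - 3)) (c (k - 2)) (g 1) hx01 hx12' hnc
        rcases lt_or_gt_of_ne hsne with hlt | hgt
        · left
          have hkey := cup_append (k - 1) c hcup (g 1) (by omega)
            (by
              have e : k - 1 - 1 = k - 2 := by omega
              rw [e]; exact hx12')
            (by
              have e1 : k - 1 - 1 = k - 2 := by omega
              have e2 : k - 1 - 2 = k - 3 := by omega
              rw [e1, e2]; exact hlt)
          have ek : k - 1 + 1 = k := by omega
          rw [ek] at hkey
          refine ⟨_, ?_, hkey⟩
          intro i hi
          split
          · exact hcP i (by assumption)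
          · exact hg1P
        · right
          have hkey := cap_prepend (l - 1) g hcap (c (k - 3)) (by omega)
            (by rw [← hce]; exact hx01)
            (by rw [← hce]; exact hgt)
          have el : l - 1 + 1 = l := by omega
          rw [el] at hkey
          refine ⟨_, ?_, hkey⟩
          intro i hi
          split
          · exact hc3P
          · exact hEP (hg (i - 1) (by omega))

/-- Erdős–Szekeres cups–caps theorem (upper bound): any C(k+ℓ-4, k-2)+1 points in
general position with distinct x-coordinates contain a k-cup or an ℓ-cap. -/
theorem stmt_2 (k l : ℕ) (hk : 2 ≤ k) (hl : 2 ≤ l) (P : Finset (ℝ × ℝ))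
    (hcard : P.card = Nat.choose (k + l - 4) (k - 2) + 1)
    (hgp : GenPos (P : Set (ℝ × ℝ)))
    (hx : ∀ p ∈ P, ∀ q ∈ P, p ≠ q → p.1 ≠ q.1) :
    (∃ f : ℕ → ℝ × ℝ, (∀ i < k, f i ∈ P) ∧ IsCupSeq k f) ∨
    (∃ f : ℕ → ℝ × ℝ, (∀ i < l, f i ∈ P) ∧ IsCapSeq l f) := by
  exact cupcap (k + l) k l le_rfl hk hl P (le_of_eq hcard.symm) hgp hx
end

section
/- For all k, ℓ ≥ 2 there exists a set of C(k+ℓ-4, k-2) points in the plane in general position, with distinct x-coordinates, containing no k-cup and no ℓ-cap. -/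
/- ### auxiliary lemmas -/

lemma slope2_comm (p q : ℝ × ℝ) : slope2 p q = slope2 q p := by
  unfold slope2
  rw [← neg_div_neg_eq]; ring_nf

lemma slope2_add (p q v : ℝ × ℝ) : slope2 (p + v) (q + v) = slope2 p q := by
  unfold slope2; simp [Prod.fst_add, Prod.snd_add]

lemma slope_eq_of_collinear (p q r : ℝ × ℝ) (hpq : p.1 ≠ q.1) (hpr : p.1 ≠ r.1)
    (h : Collinear ℝ ({p, q, r} : Set (ℝ × ℝ))) : slope2 p q = slope2 p r := by
  obtain ⟨v, hv⟩ := (collinear_iff_of_mem (Set.mem_insert p _)).1 h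
  obtain ⟨a, ha⟩ := hv q (by simp)
  obtain ⟨b, hb⟩ := hv r (by simp)
  have ha1 : q.1 = a * v.1 + p.1 := by rw [ha]; simp [Prod.smul_def]
  have ha2 : q.2 = a * v.2 + p.2 := by rw [ha]; simp [Prod.smul_def]
  have hb1 : r.1 = b * v.1 + p.1 := by rw [hb]; simp [Prod.smul_def]
  have hb2 : r.2 = b * v.2 + p.2 := by rw [hb]; simp [Prod.smul_def]
  have hav : a * v.1 ≠ 0 := by intro h0; apply hpq; rw [ha1, h0]; ring
  have hbv : b * v.1 ≠ 0 := by intro h0; apply hpr; rw [hb1, h0]; ring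
  have ha0 : a ≠ 0 := fun h0 => hav (by rw [h0]; ring)
  have hb0 : b ≠ 0 := fun h0 => hbv (by rw [h0]; ring)
  unfold slope2
  rw [ha1, ha2, hb1, hb2]
  have key : ∀ c : ℝ, c ≠ 0 → (c * v.2 + p.2 - p.2) / (c * v.1 + p.1 - p.1) = v.2 / v.1 := by
    intro c hc
    rw [show c * v.2 + p.2 - p.2 = c * v.2 by ring, show c * v.1 + p.1 - p.1 = c * v.1 by ring,
      mul_div_mul_left _ _ hc]
  rw [key a ha0, key b hb0]

lemma collinear_triple_add (p q r v : ℝ × ℝ)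
    (h : Collinear ℝ ({p, q, r} : Set (ℝ × ℝ))) :
    Collinear ℝ ({p + v, q + v, r + v} : Set (ℝ × ℝ)) := by
  obtain ⟨d, hd⟩ := (collinear_iff_of_mem (Set.mem_insert p _)).1 h
  refine (collinear_iff_of_mem (Set.mem_insert (p + v) _)).2 ⟨d, ?_⟩
  intro x hx
  simp only [Set.mem_insert_iff, Set.mem_singleton_iff] at hx
  rcases hx with rfl | rfl | rfl
  · exact ⟨0, by simp⟩
  · obtain ⟨a, ha⟩ := hd q (by simp)
    exact ⟨a, by simp only [ha, vadd_eq_add]; abel⟩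
  · obtain ⟨b, hb⟩ := hd r (by simp)
    exact ⟨b, by simp only [hb, vadd_eq_add]; abel⟩

lemma collinear_rot (a b c : ℝ × ℝ) (h : Collinear ℝ ({a, b, c} : Set (ℝ × ℝ))) :
    Collinear ℝ ({b, c, a} : Set (ℝ × ℝ)) := by
  have hs : ({b, c, a} : Set (ℝ × ℝ)) = {a, b, c} := by ext x; simp; tauto
  rw [hs]; exact h

lemma collinear_swap (a b c : ℝ × ℝ) (h : Collinear ℝ ({a, b, c} : Set (ℝ × ℝ))) :
    Collinear ℝ ({a, c, b} : Set (ℝ × ℝ)) := by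
  have hs : ({a, c, b} : Set (ℝ × ℝ)) = {a, b, c} := by ext x; simp; tauto
  rw [hs]; exact h

lemma isCupSeq_add (m : ℕ) (f : ℕ → ℝ × ℝ) (v : ℝ × ℝ) (h : IsCupSeq m f) :
    IsCupSeq m (fun i => f i + v) := by
  refine ⟨fun i j hij hj => ?_, fun i hi => ?_⟩
  · simpa [Prod.fst_add] using h.1 i j hij hj
  · simpa [slope2_add] using h.2 i hi

lemma isCapSeq_add (m : ℕ) (f : ℕ → ℝ × ℝ) (v : ℝ × ℝ) (h : IsCapSeq m f) :
    IsCapSeq m (fun i => f i + v) := by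
  refine ⟨fun i j hij hj => ?_, fun i hi => ?_⟩
  · simpa [Prod.fst_add] using h.1 i j hij hj
  · simpa [slope2_add] using h.2 i hi

lemma isCapSeq_shift (m : ℕ) (f : ℕ → ℝ × ℝ) (h : IsCapSeq m f) :
    IsCapSeq (m - 1) (fun i => f (i + 1)) := by
  refine ⟨fun i j hij hj => h.1 (i+1) (j+1) (by omega) (by omega), fun i hi => ?_⟩
  exact h.2 (i + 1) (by omega)

/-- One-point configuration avoiding any 2-cup/2-cap and any longer ones. -/
lemma singleton_good (m₁ m₂ : ℕ) (hm₁ : 2 ≤ m₁) (hm₂ : 2 ≤ m₂) :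
    ∃ P : Finset (ℝ × ℝ), P.card = 1 ∧
      GenPos (P : Set (ℝ × ℝ)) ∧
      (∀ p ∈ P, ∀ q ∈ P, p ≠ q → p.1 ≠ q.1) ∧
      (¬ ∃ f : ℕ → ℝ × ℝ, (∀ i < m₁, f i ∈ P) ∧ IsCupSeq m₁ f) ∧
      (¬ ∃ f : ℕ → ℝ × ℝ, (∀ i < m₂, f i ∈ P) ∧ IsCapSeq m₂ f) := by
  refine ⟨{((0:ℝ), (0:ℝ))}, by simp, ?_, ?_, ?_, ?_⟩
  · intro p hp q hq r hr hpq hpr hqr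
    simp only [Finset.coe_singleton, Set.mem_singleton_iff] at hp hq
    exact absurd (hp.trans hq.symm) hpq
  · intro p hp q hq hpq
    simp only [Finset.mem_singleton] at hp hq
    exact absurd (hp.trans hq.symm) hpq
  · rintro ⟨f, hf, hcup⟩
    have h0 := hf 0 (by omega)
    have h1 := hf 1 (by omega)
    simp only [Finset.mem_singleton] at h0 h1
    have := hcup.1 0 1 (by norm_num) (by omega)
    rw [h0, h1] at this
    exact lt_irrefl _ this
  · rintro ⟨f, hf, hcap⟩
    have h0 := hf 0 (by omega)
    have h1 := hf 1 (by omega)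
    simp only [Finset.mem_singleton] at h0 h1
    have := hcap.1 0 1 (by norm_num) (by omega)
    rw [h0, h1] at this
    exact lt_irrefl _ this

lemma es_aux : ∀ n k l : ℕ, 2 ≤ k → 2 ≤ l → k + l ≤ n →
    ∃ P : Finset (ℝ × ℝ), P.card = Nat.choose (k + l - 4) (k - 2) ∧
      GenPos (P : Set (ℝ × ℝ)) ∧
      (∀ p ∈ P, ∀ q ∈ P, p ≠ q → p.1 ≠ q.1) ∧
      (¬ ∃ f : ℕ → ℝ × ℝ, (∀ i < k, f i ∈ P) ∧ IsCupSeq k f) ∧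
      (¬ ∃ f : ℕ → ℝ × ℝ, (∀ i < l, f i ∈ P) ∧ IsCapSeq l f) := by
  intro n
  induction n with
  | zero => intro k l hk hl hn; omega
  | succ n ih =>
    intro k l hk hl hn
    by_cases hk2 : k = 2
    · subst hk2
      obtain ⟨P, h1, h2, h3, h4, h5⟩ := singleton_good 2 l (le_refl 2) hl
      exact ⟨P, by rw [h1, show 2 - 2 = 0 by omega, Nat.choose_zero_right], h2, h3, h4, h5⟩
    by_cases hl2 : l = 2
    · subst hl2
      obtain ⟨P, h1, h2, h3, h4, h5⟩ := singleton_good k 2 hk (le_refl 2)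
      refine ⟨P, ?_, h2, h3, h4, h5⟩
      rw [h1, show k + 2 - 4 = k - 2 by omega, Nat.choose_self]
    -- recursive case
    have hk3 : 3 ≤ k := by omega
    have hl3 : 3 ≤ l := by omega
    obtain ⟨A, hAcard, hAgen, hAx, hAcup, hAcap⟩ := ih (k-1) l (by omega) hl (by omega)
    obtain ⟨B, hBcard, hBgen, hBx, hBcup, hBcap⟩ := ih k (l-1) hk (by omega) (by omega)
    have hA0 : A.Nonempty := Finset.card_pos.1 (by rw [hAcard]; exact Nat.choose_pos (by omega))
    have hB0 : B.Nonempty := Finset.card_pos.1 (by rw [hBcard]; exact Nat.choose_pos (by omega))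
    classical
    set s1 : Finset ℝ := (A ×ˢ B).image (fun p => p.1.1 - p.2.1) with hs1def
    have hs1 : s1.Nonempty := (hA0.product hB0).image _
    set T : ℝ := s1.max' hs1 + 1 with hTdef
    have hTlt : ∀ a ∈ A, ∀ b ∈ B, a.1 - b.1 < T := by
      intro a ha b hb
      have hmem : a.1 - b.1 ∈ s1 :=
        Finset.mem_image.2 ⟨(a, b), Finset.mem_product.2 ⟨ha, hb⟩, rfl⟩
      have := Finset.le_max' s1 _ hmem
      rw [hTdef]; linarith
    set s2 : Finset ℝ := ((A ×ˢ A) ∪ (B ×ˢ B)).image (fun p => slope2 p.1 p.2) with hs2def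
    have hs2 : s2.Nonempty := by
      refine Finset.Nonempty.image ?_ _
      exact Finset.Nonempty.mono Finset.subset_union_left (hA0.product hA0)
    set S : ℝ := s2.max' hs2 with hSdef
    have hSA : ∀ a₁ ∈ A, ∀ a₂ ∈ A, slope2 a₁ a₂ ≤ S := by
      intro a₁ h1 a₂ h2
      refine Finset.le_max' s2 _ ?_
      exact Finset.mem_image.2 ⟨(a₁, a₂),
        Finset.mem_union_left _ (Finset.mem_product.2 ⟨h1, h2⟩), rfl⟩
    have hSB : ∀ b₁ ∈ B, ∀ b₂ ∈ B, slope2 b₁ b₂ ≤ S := by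
      intro b₁ h1 b₂ h2
      refine Finset.le_max' s2 _ ?_
      exact Finset.mem_image.2 ⟨(b₁, b₂),
        Finset.mem_union_right _ (Finset.mem_product.2 ⟨h1, h2⟩), rfl⟩
    set s3 : Finset ℝ :=
      (A ×ˢ B).image (fun p => S * (p.2.1 + T - p.1.1) - p.2.2 + p.1.2) with hs3def
    have hs3 : s3.Nonempty := (hA0.product hB0).image _
    set M : ℝ := s3.max' hs3 + 1 with hMdef
    set v : ℝ × ℝ := (T, M) with hvdef
    have hden : ∀ a ∈ A, ∀ b ∈ B, 0 < b.1 + T - a.1 := by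
      intro a ha b hb; have := hTlt a ha b hb; linarith
    have hxlt : ∀ a ∈ A, ∀ b ∈ B, a.1 < (b + v).1 := by
      intro a ha b hb
      have := hTlt a ha b hb
      have hb1 : (b + v).1 = b.1 + T := rfl
      rw [hb1]; linarith
    have hcross : ∀ a ∈ A, ∀ b ∈ B, S < slope2 a (b + v) := by
      intro a ha b hb
      have hmem : S * (b.1 + T - a.1) - b.2 + a.2 ∈ s3 :=
        Finset.mem_image.2 ⟨(a, b), Finset.mem_product.2 ⟨ha, hb⟩, rfl⟩
      have h1 : S * (b.1 + T - a.1) - b.2 + a.2 < M := by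
        have := Finset.le_max' s3 _ hmem; rw [hMdef]; linarith
      have h2 := hden a ha b hb
      have hslope : slope2 a (b + v) = (b.2 + M - a.2) / (b.1 + T - a.1) := by
        unfold slope2
        have e1 : (b + v).1 = b.1 + T := rfl
        have e2 : (b + v).2 = b.2 + M := rfl
        rw [e1, e2]
      rw [hslope, lt_div_iff₀ h2]; linarith
    set B' : Finset (ℝ × ℝ) := B.image (fun b => b + v) with hB'def
    have hdisj : Disjoint A B' := by
      rw [Finset.disjoint_left]
      intro p hpA hpB
      obtain ⟨b, hb, rfl⟩ := Finset.mem_image.1 hpB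
      exact lt_irrefl _ (hxlt _ hpA b hb)
    have hinj : Function.Injective (fun b : ℝ × ℝ => b + v) := add_left_injective v
    -- key non-collinearity lemmas
    have key2 : ∀ a₁ ∈ A, ∀ a₂ ∈ A, ∀ b ∈ B, a₁ ≠ a₂ →
        ¬ Collinear ℝ ({a₁, a₂, b + v} : Set (ℝ × ℝ)) := by
      intro a₁ h1 a₂ h2 b hb hne hcol
      have hx12 : a₁.1 ≠ a₂.1 := hAx a₁ h1 a₂ h2 hne
      have hx13 : a₁.1 ≠ (b + v).1 := ne_of_lt (hxlt a₁ h1 b hb)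
      have heq := slope_eq_of_collinear _ _ _ hx12 hx13 hcol
      have hS1 := hSA a₁ h1 a₂ h2
      have hS2 := hcross a₁ h1 b hb
      linarith [heq, hS1, hS2]
    have key1 : ∀ a ∈ A, ∀ b₁ ∈ B, ∀ b₂ ∈ B, b₁ ≠ b₂ →
        ¬ Collinear ℝ ({a, b₁ + v, b₂ + v} : Set (ℝ × ℝ)) := by
      intro a ha b₁ h1 b₂ h2 hne hcol
      have hcol' := collinear_rot _ _ _ hcol
      have hx12 : (b₁ + v).1 ≠ (b₂ + v).1 := by
        have := hBx b₁ h1 b₂ h2 hne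
        have e1 : (b₁ + v).1 = b₁.1 + T := rfl
        have e2 : (b₂ + v).1 = b₂.1 + T := rfl
        rw [e1, e2]; intro h; apply this; linarith
      have hx13 : (b₁ + v).1 ≠ a.1 := (ne_of_lt (hxlt a ha b₁ h1)).symm
      have heq := slope_eq_of_collinear _ _ _ hx12 hx13 hcol'
      rw [slope2_add] at heq
      have hS1 := hSB b₁ h1 b₂ h2
      have hS2 := hcross a ha b₁ h1
      rw [slope2_comm a (b₁ + v)] at hS2
      linarith
    have key0 : ∀ b₁ ∈ B, ∀ b₂ ∈ B, ∀ b₃ ∈ B, b₁ ≠ b₂ → b₁ ≠ b₃ → b₂ ≠ b₃ →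
        ¬ Collinear ℝ ({b₁ + v, b₂ + v, b₃ + v} : Set (ℝ × ℝ)) := by
      intro b₁ h1 b₂ h2 b₃ h3 hne12 hne13 hne23 hcol
      have := collinear_triple_add _ _ _ (-v) hcol
      simp only [add_neg_cancel_right] at this
      exact hBgen b₁ (Finset.mem_coe.2 h1) b₂ (Finset.mem_coe.2 h2) b₃ (Finset.mem_coe.2 h3)
        hne12 hne13 hne23 this
    refine ⟨A ∪ B', ?_, ?_, ?_, ?_, ?_⟩
    · -- cardinality
      rw [Finset.card_union_of_disjoint hdisj, hB'def,
        Finset.card_image_of_injective B hinj, hAcard, hBcard]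
      rw [show k - 1 + l - 4 = k + l - 5 by omega, show k - 1 - 2 = k - 3 by omega,
        show k + (l - 1) - 4 = k + l - 5 by omega, show k + l - 4 = (k + l - 5) + 1 by omega,
        show k - 2 = (k - 3) + 1 by omega, Nat.choose_succ_succ]
    · -- general position
      intro p hp q hq r hr hpq hpr hqr hcol
      rw [Finset.mem_coe, Finset.mem_union] at hp hq hr
      rcases hp with hp | hp <;> rcases hq with hq | hq <;> rcases hr with hr | hr
      · exact hAgen p (Finset.mem_coe.2 hp) q (Finset.mem_coe.2 hq) r (Finset.mem_coe.2 hr)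
          hpq hpr hqr hcol
      · obtain ⟨b, hb, rfl⟩ := Finset.mem_image.1 hr
        exact key2 p hp q hq b hb hpq hcol
      · obtain ⟨b, hb, rfl⟩ := Finset.mem_image.1 hq
        exact key2 p hp r hr b hb hpr (collinear_swap _ _ _ hcol)
      · obtain ⟨b₁, hb₁, rfl⟩ := Finset.mem_image.1 hq
        obtain ⟨b₂, hb₂, rfl⟩ := Finset.mem_image.1 hr
        exact key1 p hp b₁ hb₁ b₂ hb₂ (fun h => hqr (by rw [h])) hcol
      · obtain ⟨b, hb, rfl⟩ := Finset.mem_image.1 hp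
        exact key2 q hq r hr b hb hqr (collinear_rot _ _ _ hcol)
      · obtain ⟨b₁, hb₁, rfl⟩ := Finset.mem_image.1 hp
        obtain ⟨b₂, hb₂, rfl⟩ := Finset.mem_image.1 hr
        exact key1 q hq b₁ hb₁ b₂ hb₂ (fun h => hpr (by rw [h]))
          (collinear_swap _ _ _ (collinear_rot _ _ _ hcol))
      · obtain ⟨b₁, hb₁, rfl⟩ := Finset.mem_image.1 hp
        obtain ⟨b₂, hb₂, rfl⟩ := Finset.mem_image.1 hq
        exact key1 r hr b₁ hb₁ b₂ hb₂ (fun h => hpq (by rw [h]))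
          (collinear_rot _ _ _ (collinear_rot _ _ _ hcol))
      · obtain ⟨b₁, hb₁, rfl⟩ := Finset.mem_image.1 hp
        obtain ⟨b₂, hb₂, rfl⟩ := Finset.mem_image.1 hq
        obtain ⟨b₃, hb₃, rfl⟩ := Finset.mem_image.1 hr
        exact key0 b₁ hb₁ b₂ hb₂ b₃ hb₃ (fun h => hpq (by rw [h]))
          (fun h => hpr (by rw [h])) (fun h => hqr (by rw [h])) hcol
    · -- distinct x-coordinates
      intro p hp q hq hpq
      rw [Finset.mem_union] at hp hq
      rcases hp with hp | hp <;> rcases hq with hq | hq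
      · exact hAx p hp q hq hpq
      · obtain ⟨b, hb, rfl⟩ := Finset.mem_image.1 hq
        exact ne_of_lt (hxlt p hp b hb)
      · obtain ⟨b, hb, rfl⟩ := Finset.mem_image.1 hp
        exact (ne_of_lt (hxlt q hq b hb)).symm
      · obtain ⟨b₁, hb₁, rfl⟩ := Finset.mem_image.1 hp
        obtain ⟨b₂, hb₂, rfl⟩ := Finset.mem_image.1 hq
        have hne : b₁ ≠ b₂ := fun h => hpq (by rw [h])
        have := hBx b₁ hb₁ b₂ hb₂ hne
        have e1 : (b₁ + v).1 = b₁.1 + T := rfl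
        have e2 : (b₂ + v).1 = b₂.1 + T := rfl
        rw [e1, e2]; intro h; apply this; linarith
    · -- no k-cup
      rintro ⟨f, hf, hcup⟩
      have hup : ∀ i j, i < j → j < k → f i ∈ B' → f j ∈ B' := by
        intro i j hij hj hBi
        rcases Finset.mem_union.1 (hf j hj) with hA | hB
        · obtain ⟨b, hb, hEq⟩ := Finset.mem_image.1 hBi
          have h1 := hxlt (f j) hA b hb
          rw [hEq] at h1
          have h2 := hcup.1 i j hij hj
          linarith
        · exact hB
      by_cases h0 : f 0 ∈ B'
      · apply hBcup
        refine ⟨fun i => f i + -v, fun i hi => ?_, isCupSeq_add k f (-v) hcup⟩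
        have hBi : f i ∈ B' := by
          rcases Nat.eq_zero_or_pos i with h | h
          · rw [h]; exact h0
          · exact hup 0 i h hi h0
        obtain ⟨b, hb, hEq⟩ := Finset.mem_image.1 hBi
        show f i + -v ∈ B
        rw [← hEq]
        simpa using hb
      · have h0A : f 0 ∈ A := (Finset.mem_union.1 (hf 0 (by omega))).resolve_right h0
        by_cases hall : ∀ i, i < k - 1 → f i ∈ A
        · exact hAcup ⟨f, hall, ⟨fun i j hij hj => hcup.1 i j hij (by omega),
            fun i hi => hcup.2 i (by omega)⟩⟩
        · push_neg at hall
          obtain ⟨j, hj, hjA⟩ := hall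
          have hjB : f j ∈ B' := (Finset.mem_union.1 (hf j (by omega))).resolve_left hjA
          have hex : ∃ m, m < k ∧ f m ∈ B' := ⟨j, by omega, hjB⟩
          obtain ⟨hmk, hmB⟩ := Nat.find_spec hex
          set m := Nat.find hex with hmdef
          have hmle : m ≤ j := Nat.find_le ⟨by omega, hjB⟩
          have hm1 : 1 ≤ m := by
            rcases Nat.eq_zero_or_pos m with h | h
            · rw [h] at hmB; exact absurd hmB (Finset.disjoint_left.1 hdisj h0A)
            · exact h
          have hprev : f (m-1) ∈ A := by
            have hmin := Nat.find_min hex (show m - 1 < m by omega)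
            rcases Finset.mem_union.1 (hf (m-1) (by omega)) with h | h
            · exact h
            · exact absurd (⟨by omega, h⟩ : m - 1 < k ∧ f (m-1) ∈ B') hmin
          have hnext : f (m+1) ∈ B' := hup m (m+1) (by omega) (by omega) hmB
          obtain ⟨b₁, hb₁, hEq₁⟩ := Finset.mem_image.1 hmB
          obtain ⟨b₂, hb₂, hEq₂⟩ := Finset.mem_image.1 hnext
          have hs := hcup.2 (m-1) (by omega)
          rw [show m - 1 + 1 = m by omega, show m - 1 + 2 = m + 1 by omega] at hs
          rw [← hEq₁, ← hEq₂] at hs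
          rw [slope2_add] at hs
          have h1 := hcross (f (m-1)) hprev b₁ hb₁
          have h2 := hSB b₁ hb₁ b₂ hb₂
          linarith
    · -- no l-cap
      rintro ⟨f, hf, hcap⟩
      have hup : ∀ i j, i < j → j < l → f i ∈ B' → f j ∈ B' := by
        intro i j hij hj hBi
        rcases Finset.mem_union.1 (hf j hj) with hA | hB
        · obtain ⟨b, hb, hEq⟩ := Finset.mem_image.1 hBi
          have h1 := hxlt (f j) hA b hb
          rw [hEq] at h1
          have h2 := hcap.1 i j hij hj
          linarith
        · exact hB
      by_cases h0 : f (l-1) ∈ A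
      · apply hAcap
        refine ⟨f, fun i hi => ?_, hcap⟩
        by_cases hi' : i = l - 1
        · rw [hi']; exact h0
        · rcases Finset.mem_union.1 (hf i hi) with h | h
          · exact h
          · exact absurd h0 (Finset.disjoint_left.1 hdisj.symm
              (hup i (l-1) (by omega) (by omega) h))
      · have h0B : f (l-1) ∈ B' := (Finset.mem_union.1 (hf (l-1) (by omega))).resolve_left h0
        by_cases h1 : f 1 ∈ B'
        · apply hBcap
          refine ⟨fun i => f (i+1) + -v, fun i hi => ?_,
            isCapSeq_add (l-1) (fun i => f (i+1)) (-v) (isCapSeq_shift l f hcap)⟩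
          have hBi : f (i+1) ∈ B' := by
            rcases Nat.eq_zero_or_pos i with h | h
            · rw [h]; exact h1
            · exact hup 1 (i+1) (by omega) (by omega) h1
          obtain ⟨b, hb, hEq⟩ := Finset.mem_image.1 hBi
          show f (i + 1) + -v ∈ B
          rw [← hEq]
          simpa using hb
        · have h1A : f 1 ∈ A := (Finset.mem_union.1 (hf 1 (by omega))).resolve_right h1
          have hex : ∃ m, m < l ∧ f m ∈ B' := ⟨l-1, by omega, h0B⟩
          obtain ⟨hml, hmB⟩ := Nat.find_spec hex
          set m := Nat.find hex with hmdef
          have hm2 : 2 ≤ m := by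
            have hne1 : m ≠ 1 := by
              intro h; rw [h] at hmB
              exact (Finset.disjoint_left.1 hdisj h1A) hmB
            have hne0 : m ≠ 0 := by
              intro h; rw [h] at hmB
              exact h1 (hup 0 1 (by omega) (by omega) hmB)
            omega
          have hp1 : f (m-1) ∈ A := by
            have hmin := Nat.find_min hex (show m - 1 < m by omega)
            rcases Finset.mem_union.1 (hf (m-1) (by omega)) with h | h
            · exact h
            · exact absurd (⟨by omega, h⟩ : m - 1 < l ∧ f (m-1) ∈ B') hmin
          have hp2 : f (m-2) ∈ A := by
            have hmin := Nat.find_min hex (show m - 2 < m by omega)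
            rcases Finset.mem_union.1 (hf (m-2) (by omega)) with h | h
            · exact h
            · exact absurd (⟨by omega, h⟩ : m - 2 < l ∧ f (m-2) ∈ B') hmin
          obtain ⟨b, hb, hEq⟩ := Finset.mem_image.1 hmB
          have hs := hcap.2 (m-2) (by omega)
          rw [show m - 2 + 1 = m - 1 by omega, show m - 2 + 2 = m by omega] at hs
          rw [← hEq] at hs
          have h1' := hcross (f (m-1)) hp1 b hb
          have h2' := hSA (f (m-2)) hp2 (f (m-1)) hp1
          linarith

/-- Erdős–Szekeres cups–caps theorem (lower bound): there are C(k+ℓ-4, k-2) points in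
general position with distinct x-coordinates containing no k-cup and no ℓ-cap. -/
theorem stmt_3 (k l : ℕ) (hk : 2 ≤ k) (hl : 2 ≤ l) :
    ∃ P : Finset (ℝ × ℝ), P.card = Nat.choose (k + l - 4) (k - 2) ∧
      GenPos (P : Set (ℝ × ℝ)) ∧
      (∀ p ∈ P, ∀ q ∈ P, p ≠ q → p.1 ≠ q.1) ∧
      (¬ ∃ f : ℕ → ℝ × ℝ, (∀ i < k, f i ∈ P) ∧ IsCupSeq k f) ∧
      (¬ ∃ f : ℕ → ℝ × ℝ, (∀ i < l, f i ∈ P) ∧ IsCapSeq l f) := by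
  exact es_aux (k + l) k l hk hl (le_refl _)
end

section
/- Let N = C(k+ℓ-4, k-2) + 1 and let c be a 2-coloring (red/blue) of the 3-element subsets of {1, ..., N} that is transitive: for i1 < i2 < i3 < i4, if {i1,i2,i3} and {i2,i3,i4} are both red (resp. both blue) then {i1,i2,i4} and {i1,i3,i4} are red (resp. blue). Then there exists a k-element subset all of whose triples are red, or an ℓ-element subset all of whose triples are blue. -/
open Finset

private lemma card3' {x y z : ℕ} (h1 : x < y) (h2 : y < z) :
    ({x, y, z} : Finset ℕ).card = 3 := by
  rw [card_insert_of_notMem (by simp; omega),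
    card_insert_of_notMem (by simp; omega), card_singleton]

private lemma ext_top {N : ℕ} {c : Finset ℕ → Bool}
    (htrans : ∀ i1 i2 i3 i4 : ℕ, 1 ≤ i1 → i1 < i2 → i2 < i3 → i3 < i4 → i4 ≤ N →
      c {i1, i2, i3} = c {i2, i3, i4} →
      c {i1, i2, i4} = c {i1, i2, i3} ∧ c {i1, i3, i4} = c {i1, i2, i3})
    {b : Bool} {S : Finset ℕ} {a p q : ℕ}
    (hS1 : ∀ x ∈ S, 1 ≤ x)
    (hmono : ∀ T ⊆ S, T.card = 3 → c T = b)
    (ha : a ∈ S) (hp : p ∈ S) (hap : a < p)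
    (hmax : ∀ x ∈ S, x ≤ p) (hsec : ∀ x ∈ S, x ≠ p → x ≤ a)
    (hpq : p < q) (hqN : q ≤ N)
    (htri : c {a, p, q} = b) :
    ∀ T ⊆ insert q S, T.card = 3 → c T = b := by
  have aux1 : ∀ x ∈ S, x ≠ p → c {x, p, q} = b := by
    intro x hx hxp
    rcases eq_or_lt_of_le (hsec x hx hxp) with h | h
    · subst h; exact htri
    · have h1 : c {x, a, p} = b :=
        hmono _ (by simp [insert_subset_iff, hx, ha, hp]) (card3' h hap)
      have := htrans x a p q (hS1 x hx) h hap hpq hqN (h1.trans htri.symm)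
      rw [this.2, h1]
  have aux2 : ∀ x ∈ S, ∀ y ∈ S, x < y → c {x, y, q} = b := by
    intro x hx y hy hxy
    rcases eq_or_ne y p with rfl | hyp
    · exact aux1 x hx (by omega)
    · have hyplt : y < p := lt_of_le_of_ne (hmax y hy) hyp
      have h1 : c {x, y, p} = b :=
        hmono _ (by simp [insert_subset_iff, hx, hy, hp]) (card3' hxy hyplt)
      have h2 : c {y, p, q} = b := aux1 y hy hyp
      have := htrans x y p q (hS1 x hx) hxy hyplt hpq hqN (h1.trans h2.symm)
      rw [this.1, h1]
  intro T hT hTcard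
  by_cases hqT : q ∈ T
  · have hT' : T.erase q ⊆ S := by
      intro x hx
      rcases mem_insert.mp (hT (mem_of_mem_erase hx)) with rfl | h
      · exact absurd rfl (ne_of_mem_erase hx)
      · exact h
    have hc2 : (T.erase q).card = 2 := by rw [card_erase_of_mem hqT, hTcard]
    obtain ⟨x, y, hxy, hxyeq⟩ := card_eq_two.mp hc2
    have hx : x ∈ S := hT' (by simp [hxyeq])
    have hy : y ∈ S := hT' (by simp [hxyeq])
    rcases lt_or_gt_of_ne hxy with h | h
    · have hTeq : T = {x, y, q} := by
        rw [← insert_erase hqT, hxyeq]; ext z; simp; try tauto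
      rw [hTeq]; exact aux2 x hx y hy h
    · have hTeq : T = {y, x, q} := by
        rw [← insert_erase hqT, hxyeq]; ext z; simp; try tauto
      rw [hTeq]; exact aux2 y hy x hx h
  · refine hmono T (fun x hx => ?_) hTcard
    rcases mem_insert.mp (hT hx) with rfl | h
    · exact absurd hx hqT
    · exact h

private lemma ext_bot {N : ℕ} {c : Finset ℕ → Bool}
    (htrans : ∀ i1 i2 i3 i4 : ℕ, 1 ≤ i1 → i1 < i2 → i2 < i3 → i3 < i4 → i4 ≤ N →
      c {i1, i2, i3} = c {i2, i3, i4} →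
      c {i1, i2, i4} = c {i1, i2, i3} ∧ c {i1, i3, i4} = c {i1, i2, i3})
    {b : Bool} {S : Finset ℕ} {a p r : ℕ}
    (hSN : ∀ x ∈ S, x ≤ N)
    (hmono : ∀ T ⊆ S, T.card = 3 → c T = b)
    (hp : p ∈ S) (hr : r ∈ S) (hpr : p < r)
    (hmin : ∀ x ∈ S, p ≤ x) (hsec : ∀ x ∈ S, x ≠ p → r ≤ x)
    (hap : a < p) (ha1 : 1 ≤ a)
    (htri : c {a, p, r} = b) :
    ∀ T ⊆ insert a S, T.card = 3 → c T = b := by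
  have aux1 : ∀ y ∈ S, y ≠ p → c {a, p, y} = b := by
    intro y hy hyp
    rcases eq_or_lt_of_le (hsec y hy hyp) with h | h
    · subst h; exact htri
    · have h1 : c {p, r, y} = b :=
        hmono _ (by simp [insert_subset_iff, hy, hr, hp]) (card3' hpr h)
      have := htrans a p r y ha1 hap hpr h (hSN y hy) (htri.trans h1.symm)
      rw [this.1, htri]
  have aux2 : ∀ x ∈ S, ∀ y ∈ S, x < y → c {a, x, y} = b := by
    intro x hx y hy hxy
    rcases eq_or_ne x p with rfl | hxp
    · exact aux1 y hy (by omega)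
    · have hpx : p < x := lt_of_le_of_ne (hmin x hx) (Ne.symm hxp)
      have h1 : c {a, p, x} = b := aux1 x hx hxp
      have h2 : c {p, x, y} = b :=
        hmono _ (by simp [insert_subset_iff, hx, hy, hp]) (card3' hpx hxy)
      have := htrans a p x y ha1 hap hpx hxy (hSN y hy) (h1.trans h2.symm)
      rw [this.2, h1]
  intro T hT hTcard
  by_cases haT : a ∈ T
  · have hT' : T.erase a ⊆ S := by
      intro x hx
      rcases mem_insert.mp (hT (mem_of_mem_erase hx)) with rfl | h
      · exact absurd rfl (ne_of_mem_erase hx)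
      · exact h
    have hc2 : (T.erase a).card = 2 := by rw [card_erase_of_mem haT, hTcard]
    obtain ⟨x, y, hxy, hxyeq⟩ := card_eq_two.mp hc2
    have hx : x ∈ S := hT' (by simp [hxyeq])
    have hy : y ∈ S := hT' (by simp [hxyeq])
    rcases lt_or_gt_of_ne hxy with h | h
    · have hTeq : T = {a, x, y} := by
        rw [← insert_erase haT, hxyeq]
      rw [hTeq]; exact aux2 x hx y hy h
    · have hTeq : T = {a, y, x} := by
        rw [← insert_erase haT, hxyeq]; ext z; simp; try tauto
      rw [hTeq]; exact aux2 y hy x hx h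
  · refine hmono T (fun x hx => ?_) hTcard
    rcases mem_insert.mp (hT hx) with rfl | h
    · exact absurd hx haT
    · exact h

private lemma cupcap_main {N : ℕ} {c : Finset ℕ → Bool}
    (htrans : ∀ i1 i2 i3 i4 : ℕ, 1 ≤ i1 → i1 < i2 → i2 < i3 → i3 < i4 → i4 ≤ N →
      c {i1, i2, i3} = c {i2, i3, i4} →
      c {i1, i2, i4} = c {i1, i2, i3} ∧ c {i1, i3, i4} = c {i1, i2, i3}) :
    ∀ n k l : ℕ, k + l ≤ n → 2 ≤ k → 2 ≤ l →
    ∀ A : Finset ℕ, A ⊆ Finset.Icc 1 N →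
    Nat.choose (k + l - 4) (k - 2) < A.card →
    (∃ S ⊆ A, S.card = k ∧ ∀ T ⊆ S, T.card = 3 → c T = true) ∨
    (∃ S ⊆ A, S.card = l ∧ ∀ T ⊆ S, T.card = 3 → c T = false) := by
  intro n
  induction n with
  | zero => intro k l hn hk hl; omega
  | succ n ih =>
    intro k l hn hk hl A hA hcard
    have hbound : ∀ x ∈ A, 1 ≤ x ∧ x ≤ N := fun x hx => by
      have := hA hx; rw [mem_Icc] at this; exact this
    rcases eq_or_lt_of_le hk with hk2 | hk3
    · -- k = 2
      left
      have h2 : 2 ≤ A.card := by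
        have : Nat.choose (k + l - 4) (k - 2) = 1 := by
          rw [← hk2]; simp
        omega
      obtain ⟨S, hS, hScard⟩ := Finset.exists_subset_card_eq h2
      refine ⟨S, hS, by omega, fun T hT hTc => ?_⟩
      exact absurd hTc (by have := card_le_card hT; omega)
    rcases eq_or_lt_of_le hl with hl2 | hl3
    · -- l = 2
      right
      have h2 : 2 ≤ A.card := by
        have : Nat.choose (k + l - 4) (k - 2) = 1 := by
          have : k + l - 4 = k - 2 := by omega
          rw [this]; simp
        omega
      obtain ⟨S, hS, hScard⟩ := Finset.exists_subset_card_eq h2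
      refine ⟨S, hS, by omega, fun T hT hTc => ?_⟩
      exact absurd hTc (by have := card_le_card hT; omega)
    -- now 3 ≤ k, 3 ≤ l
    by_contra hcon
    rcases not_or.mp hcon with ⟨hred, hblue⟩
    set E : Finset ℕ := A.filter (fun p => ∃ U, U ⊆ A ∧ U.card = k - 1 ∧
      (∀ T ⊆ U, T.card = 3 → c T = true) ∧ p ∈ U ∧ ∀ x ∈ U, x ≤ p) with hEdef
    have hAE : (A \ E).card ≤ Nat.choose (k - 1 + l - 4) (k - 1 - 2) := by
      by_contra hlt
      push_neg at hlt
      have hsub : A \ E ⊆ Finset.Icc 1 N := (sdiff_subset).trans hA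
      rcases ih (k - 1) l (by omega) (by omega) hl (A \ E) hsub hlt with
        ⟨U, hU, hUcard, hUmono⟩ | ⟨S, hS, hScard, hSmono⟩
      · have hUne : U.Nonempty := card_pos.mp (by omega)
        have hpU : U.max' hUne ∈ U := U.max'_mem hUne
        have hpAE : U.max' hUne ∈ A \ E := hU hpU
        have hpE : U.max' hUne ∈ E := mem_filter.mpr ⟨(mem_sdiff.mp hpAE).1,
          U, hU.trans sdiff_subset, hUcard, hUmono, hpU, fun x hx => U.le_max' x hx⟩
        exact (mem_sdiff.mp hpAE).2 hpE
      · exact hblue ⟨S, hS.trans sdiff_subset, hScard, hSmono⟩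
    have hEcard : Nat.choose (k + (l - 1) - 4) (k - 2) < E.card := by
      have h1 : (A \ E).card + E.card = A.card :=
        card_sdiff_add_card_eq_card (filter_subset _ _)
      have hpas : Nat.choose (k + l - 4) (k - 2) =
          Nat.choose (k - 1 + l - 4) (k - 1 - 2) +
          Nat.choose (k + (l - 1) - 4) (k - 2) := by
        have e1 : k + l - 4 = (k + l - 5) + 1 := by omega
        have e2 : k - 2 = (k - 3) + 1 := by omega
        have e3 : k - 1 + l - 4 = k + l - 5 := by omega
        have e4 : k - 1 - 2 = k - 3 := by omega
        have e5 : k + (l - 1) - 4 = k + l - 5 := by omega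
        rw [e1, e2, e3, e4, e5, Nat.choose_succ_succ]
      omega
    have hEsub : E ⊆ Finset.Icc 1 N := (filter_subset _ _).trans hA
    rcases ih k (l - 1) (by omega) hk (by omega) E hEsub hEcard with
      ⟨S, hS, hScard, hSmono⟩ | ⟨C, hC, hCcard, hCmono⟩
    · exact hred ⟨S, hS.trans (filter_subset _ _), hScard, hSmono⟩
    · have hCA : C ⊆ A := hC.trans (filter_subset _ _)
      have hCne : C.Nonempty := card_pos.mp (by omega)
      set p := C.min' hCne with hpdef
      have hpC : p ∈ C := C.min'_mem hCne
      have hpE : p ∈ E := hC hpC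
      obtain ⟨hpA, U, hUA, hUcard, hUmono, hpU, hUmax⟩ := mem_filter.mp hpE
      have hUe : (U.erase p).Nonempty := by
        rw [← card_pos, card_erase_of_mem hpU]; omega
      set a := (U.erase p).max' hUe with hadef
      have haU : a ∈ U := mem_of_mem_erase ((U.erase p).max'_mem hUe)
      have hanep : a ≠ p := ne_of_mem_erase ((U.erase p).max'_mem hUe)
      have hap : a < p := lt_of_le_of_ne (hUmax a haU) hanep
      have hsec : ∀ x ∈ U, x ≠ p → x ≤ a :=
        fun x hx hxp => le_max' _ x (mem_erase.mpr ⟨hxp, hx⟩)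
      have hCe : (C.erase p).Nonempty := by
        rw [← card_pos, card_erase_of_mem hpC]; omega
      set q := (C.erase p).min' hCe with hqdef
      have hqC : q ∈ C := mem_of_mem_erase ((C.erase p).min'_mem hCe)
      have hqnep : q ≠ p := ne_of_mem_erase ((C.erase p).min'_mem hCe)
      have hpq : p < q := lt_of_le_of_ne (C.min'_le q hqC) (Ne.symm hqnep)
      have hqsec : ∀ x ∈ C, x ≠ p → q ≤ x :=
        fun x hx hxp => min'_le _ x (mem_erase.mpr ⟨hxp, hx⟩)
      cases hcq : c {a, p, q} with
      | true =>
        have hmono' := ext_top htrans (fun x hx => (hbound x (hUA hx)).1) hUmono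
          haU hpU hap hUmax hsec hpq (hbound q (hCA hqC)).2 hcq
        have hqU : q ∉ U := fun h => absurd (hUmax q h) (by omega)
        exact hred ⟨insert q U, insert_subset (hCA hqC) hUA,
          by rw [card_insert_of_notMem hqU, hUcard]; omega, hmono'⟩
      | false =>
        have hminC : ∀ x ∈ C, p ≤ x := fun x hx => C.min'_le x hx
        have hmono' := ext_bot htrans (fun x hx => (hbound x (hCA hx)).2) hCmono
          hpC hqC hpq hminC hqsec hap (hbound a (hUA haU)).1 hcq
        have haC : a ∉ C := fun h => absurd (hminC a h) (by omega)
        exact hblue ⟨insert a C, insert_subset (hUA haU) hCA,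
          by rw [card_insert_of_notMem haC, hCcard]; omega, hmono'⟩

/-- Combinatorial cups–caps (Hubard et al.): for N = C(k+ℓ-4, k-2) + 1, every
transitive 2-coloring of the triples of {1,…,N} contains a red clique of size k
or a blue clique of size ℓ. (`c T = true` means red, `c T = false` means blue.) -/
theorem stmt_4 (k l : ℕ) (hk : 2 ≤ k) (hl : 2 ≤ l)
    (N : ℕ) (hN : N = Nat.choose (k + l - 4) (k - 2) + 1)
    (c : Finset ℕ → Bool)
    (htrans : ∀ i1 i2 i3 i4 : ℕ, 1 ≤ i1 → i1 < i2 → i2 < i3 → i3 < i4 → i4 ≤ N →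
      c {i1, i2, i3} = c {i2, i3, i4} →
      c {i1, i2, i4} = c {i1, i2, i3} ∧ c {i1, i3, i4} = c {i1, i2, i3}) :
    (∃ S ⊆ Finset.Icc 1 N, S.card = k ∧ ∀ T ⊆ S, T.card = 3 → c T = true) ∨
    (∃ S ⊆ Finset.Icc 1 N, S.card = l ∧ ∀ T ⊆ S, T.card = 3 → c T = false) := by
  have hIcc : (Finset.Icc 1 N).card = N := by rw [Nat.card_Icc]; omega
  exact cupcap_main htrans (k + l) k l le_rfl hk hl (Finset.Icc 1 N)
    (Finset.Subset.refl _) (by omega)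
end

section
/- For every k, ℓ ≥ 2 there exists a transitive 2-coloring of the triples of {1, ..., C(k+ℓ-4, k-2)} with no red clique of size k and no blue clique of size ℓ. -/
namespace Stmt5

def slope (f : ℕ → ℚ) (a b : ℕ) : ℚ := (f b - f a) / ((b : ℚ) - (a : ℚ))

def slopes (f : ℕ → ℚ) : List ℕ → List ℚ
  | a :: b :: t => slope f a b :: slopes f (b :: t)
  | _ => []

@[simp] lemma slopes_nil (f : ℕ → ℚ) : slopes f [] = [] := rfl
@[simp] lemma slopes_single (f : ℕ → ℚ) (a : ℕ) : slopes f [a] = [] := rfl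
@[simp] lemma slopes_cons₂ (f : ℕ → ℚ) (a b : ℕ) (t : List ℕ) :
    slopes f (a :: b :: t) = slope f a b :: slopes f (b :: t) := rfl

def IsCup (f : ℕ → ℚ) (xs : List ℕ) : Prop :=
  List.Pairwise (· < ·) xs ∧ List.Pairwise (· < ·) (slopes f xs)

def IsCap (f : ℕ → ℚ) (xs : List ℕ) : Prop :=
  List.Pairwise (· < ·) xs ∧ List.Pairwise (· ≥ ·) (slopes f xs)

def NoCup (f : ℕ → ℚ) (N k : ℕ) : Prop :=
  ∀ xs : List ℕ, IsCup f xs → (∀ x ∈ xs, 1 ≤ x ∧ x ≤ N) → xs.length < k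

def NoCap (f : ℕ → ℚ) (N k : ℕ) : Prop :=
  ∀ xs : List ℕ, IsCap f xs → (∀ x ∈ xs, 1 ≤ x ∧ x ≤ N) → xs.length < k

lemma slopes_congr {f g : ℕ → ℚ} : ∀ {xs : List ℕ}, (∀ x ∈ xs, f x = g x) →
    slopes f xs = slopes g xs
  | [], _ => rfl
  | [a], _ => rfl
  | a :: b :: t, h => by
    simp only [slopes_cons₂]
    rw [slopes_congr (fun x hx => h x (List.mem_cons_of_mem a hx))]
    congr 1
    simp [slope, h a (by simp), h b (by simp)]

lemma slopes_append (f : ℕ → ℚ) (a : ℕ) :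
    ∀ (L : List ℕ) (R : List ℕ) (b : ℕ),
      slopes f ((L ++ [a]) ++ (b :: R)) = slopes f (L ++ [a]) ++ slope f a b :: slopes f (b :: R)
  | [], R, b => by simp
  | x :: L, R, b => by
    have h := slopes_append f a L R b
    cases L with
    | nil => simpa using h
    | cons y L => simpa using h

lemma exists_bound (f : ℕ → ℚ) (N : ℕ) : ∃ B : ℚ, 0 ≤ B ∧ ∀ i, 1 ≤ i → i ≤ N → |f i| ≤ B := by
  induction N with
  | zero => exact ⟨0, le_refl 0, fun i h1 h2 => by omega⟩
  | succ N ih =>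
    obtain ⟨B, hB0, hB⟩ := ih
    refine ⟨max B |f (N+1)|, le_trans hB0 (le_max_left _ _), fun i h1 h2 => ?_⟩
    rcases Nat.lt_or_ge i (N+1) with h | h
    · exact le_trans (hB i h1 (by omega)) (le_max_left _ _)
    · have : i = N + 1 := by omega
      subst this; exact le_max_right _ _

lemma slope_bound {f : ℕ → ℚ} {a b : ℕ} {B : ℚ} (hab : a < b)
    (ha : |f a| ≤ B) (hb : |f b| ≤ B) : |slope f a b| ≤ 2 * B := by
  have hd : (1:ℚ) ≤ (b:ℚ) - a := by
    have : (a:ℚ) + 1 ≤ b := by exact_mod_cast hab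
    linarith
  have hd0 : (0:ℚ) < (b:ℚ) - a := by linarith
  rw [slope, abs_div, abs_of_pos hd0, div_le_iff₀ hd0]
  have h1 : |f b - f a| ≤ 2 * B := by
    calc |f b - f a| ≤ |f b| + |f a| := abs_sub _ _
    _ ≤ 2 * B := by linarith
  nlinarith [abs_nonneg (f b - f a)]

lemma sorted_split {N₁ : ℕ} : ∀ {xs : List ℕ}, List.Pairwise (· < ·) xs →
    ∃ L R : List ℕ, xs = L ++ R ∧ (∀ x ∈ L, x ≤ N₁) ∧ (∀ x ∈ R, N₁ < x)
  | [], _ => ⟨[], [], by simp⟩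
  | a :: t, h => by
    have ht : List.Pairwise (· < ·) t := h.of_cons
    rcases Nat.lt_or_ge N₁ a with hlt | hge
    · refine ⟨[], a :: t, by simp, by simp, fun x hx => ?_⟩
      rcases List.mem_cons.mp hx with rfl | hx
      · exact hlt
      · exact lt_trans hlt (List.rel_of_pairwise_cons h hx)
    · obtain ⟨L, R, heq, hL, hR⟩ := sorted_split ht
      exact ⟨a :: L, R, by simp [heq], by
        intro x hx; rcases List.mem_cons.mp hx with rfl | hx
        · exact hge
        · exact hL x hx, hR⟩

lemma slope_shift {f₂ : ℕ → ℚ} {c : ℚ} {N₁ : ℕ} {g : ℕ → ℚ}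
    (hg : ∀ x, N₁ < x → g x = f₂ (x - N₁) + c) {a b : ℕ} (ha : N₁ < a) (hb : N₁ < b) :
    slope g a b = slope f₂ (a - N₁) (b - N₁) := by
  simp only [slope]
  rw [hg a ha, hg b hb]
  have : ((b - N₁ : ℕ) : ℚ) - ((a - N₁ : ℕ) : ℚ) = (b : ℚ) - (a : ℚ) := by
    push_cast [Nat.cast_sub ha.le, Nat.cast_sub hb.le]
    ring
  rw [this]
  ring_nf

lemma slopes_shift {f₂ : ℕ → ℚ} {c : ℚ} {N₁ : ℕ} {g : ℕ → ℚ}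
    (hg : ∀ x, N₁ < x → g x = f₂ (x - N₁) + c) :
    ∀ {xs : List ℕ}, (∀ x ∈ xs, N₁ < x) → slopes g xs = slopes f₂ (xs.map (· - N₁))
  | [], _ => rfl
  | [a], _ => rfl
  | a :: b :: t, h => by
    simp only [List.map_cons, slopes_cons₂]
    rw [slopes_shift hg (fun x hx => h x (List.mem_cons_of_mem a hx))]
    simp only [List.map_cons]
    rw [slope_shift hg (h a (by simp)) (h b (by simp))]

lemma map_sub_sorted {N₁ : ℕ} {xs : List ℕ} (hs : List.Pairwise (· < ·) xs)
    (h : ∀ x ∈ xs, N₁ < x) : List.Pairwise (· < ·) (xs.map (· - N₁)) := by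
  rw [List.pairwise_map]
  exact (hs.imp_of_mem (fun {a b} ha hb hab => by
    have := h a ha; omega))

lemma length_le_one_of_Icc1 {xs : List ℕ} (hs : List.Pairwise (· < ·) xs)
    (hm : ∀ x ∈ xs, 1 ≤ x ∧ x ≤ 1) : xs.length ≤ 1 := by
  match xs with
  | [] => simp
  | [a] => simp
  | a :: b :: t =>
    exfalso
    have hab : a < b := List.rel_of_pairwise_cons hs (by simp)
    have := hm a (by simp)
    have := hm b (by simp)
    omega

lemma main (s : ℕ) : ∀ m n : ℕ, m + n = s →
    ∃ f : ℕ → ℚ, NoCup f ((m+n).choose m) (m+2) ∧ NoCap f ((m+n).choose m) (n+2) := by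
  induction s with
  | zero =>
    intro m n hmn
    have hm : m = 0 := by omega
    have hn : n = 0 := by omega
    subst hm; subst hn
    refine ⟨0, fun xs hc hmem => ?_, fun xs hc hmem => ?_⟩ <;>
    · have := length_le_one_of_Icc1 hc.1 (by simpa using hmem)
      omega
  | succ s ih =>
    intro m n hmn
    match m, n with
    | 0, n =>
      refine ⟨0, fun xs hc hmem => ?_, fun xs hc hmem => ?_⟩ <;>
      · have := length_le_one_of_Icc1 hc.1 (by simpa using hmem)
        omega
    | m+1, 0 =>
      refine ⟨0, fun xs hc hmem => ?_, fun xs hc hmem => ?_⟩ <;>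
      · have := length_le_one_of_Icc1 hc.1 (by simpa using hmem)
        omega
    | m'+1, n'+1 =>
      obtain ⟨f₁, h₁cup, h₁cap⟩ := ih m' (n'+1) (by omega)
      obtain ⟨f₂, h₂cup, h₂cap⟩ := ih (m'+1) n' (by omega)
      set N₁ := (m' + (n'+1)).choose m' with hN₁
      set N₂ := ((m'+1) + n').choose (m'+1) with hN₂
      set N := ((m'+1) + (n'+1)).choose (m'+1) with hN
      have hNeq : N = N₁ + N₂ := by
        rw [hN, hN₁, hN₂]
        have h1 : (m'+1) + (n'+1) = (m' + (n'+1)) + 1 := by omega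
        have h2 : (m'+1) + n' = m' + (n'+1) := by omega
        rw [h1, h2, Nat.choose_succ_succ]
      obtain ⟨B₁, hB₁0, hB₁⟩ := exists_bound f₁ N₁
      obtain ⟨B₂, hB₂0, hB₂⟩ := exists_bound f₂ N₂
      set B := max B₁ B₂ with hB
      have hB0 : (0:ℚ) ≤ B := le_trans hB₁0 (le_max_left _ _)
      have hBf₁ : ∀ i, 1 ≤ i → i ≤ N₁ → |f₁ i| ≤ B :=
        fun i h1 h2 => le_trans (hB₁ i h1 h2) (le_max_left _ _)
      have hBf₂ : ∀ i, 1 ≤ i → i ≤ N₂ → |f₂ i| ≤ B :=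
        fun i h1 h2 => le_trans (hB₂ i h1 h2) (le_max_right _ _)
      set c : ℚ := 2*B*(N:ℚ) + 2*B + 1 with hc
      set g : ℕ → ℚ := fun i => if i ≤ N₁ then f₁ i else f₂ (i - N₁) + c with hg
      have hgl : ∀ x, x ≤ N₁ → g x = f₁ x := fun x hx => by simp [hg, hx]
      have hgr : ∀ x, N₁ < x → g x = f₂ (x - N₁) + c := fun x hx => by
        simp [hg, Nat.not_le.mpr hx]
      -- crossing slopes are large
      have hcross : ∀ a b, 1 ≤ a → a ≤ N₁ → N₁ < b → b ≤ N → 2*B < slope g a b := by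
        intro a b h1 h2 h3 h4
        have hab : a < b := by omega
        have hfa : |f₁ a| ≤ B := hBf₁ a h1 h2
        have hfb : |f₂ (b - N₁)| ≤ B := hBf₂ (b - N₁) (by omega) (by omega)
        have hd : (1:ℚ) ≤ (b:ℚ) - a := by
          have : (a:ℚ) + 1 ≤ b := by exact_mod_cast hab
          linarith
        have hdN : (b:ℚ) - a ≤ (N:ℚ) := by
          have hb : (b:ℚ) ≤ N := by exact_mod_cast h4
          have ha : (1:ℚ) ≤ a := by exact_mod_cast h1
          linarith
        rw [slope, hgl a h2, hgr b h3, lt_div_iff₀ (by linarith)]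
        rw [abs_le] at hfa hfb
        nlinarith [hfa.1, hfa.2, hfb.1, hfb.2]
      -- internal slopes in the left part are small
      have hintL : ∀ a b, 1 ≤ a → b ≤ N₁ → a < b → |slope g a b| ≤ 2*B := by
        intro a b h1 h2 hab
        have : slope g a b = slope f₁ a b := by
          simp only [slope, hgl a (by omega), hgl b h2]
        rw [this]
        exact slope_bound hab (hBf₁ a h1 (by omega)) (hBf₁ b (by omega) h2)
      -- internal slopes in the right part are small
      have hintR : ∀ a b, N₁ < a → b ≤ N → a < b → |slope g a b| ≤ 2*B := by
        intro a b h1 h2 hab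
        rw [slope_shift hgr h1 (by omega)]
        exact slope_bound (by omega) (hBf₂ (a - N₁) (by omega) (by omega))
          (hBf₂ (b - N₁) (by omega) (by omega))
      refine ⟨g, ?_, ?_⟩
      · -- NoCup
        intro xs hcup hmem
        obtain ⟨L, R, rfl, hL, hR⟩ := sorted_split (N₁ := N₁) hcup.1
        have hLmem : ∀ x ∈ L, 1 ≤ x ∧ x ≤ N₁ := fun x hx =>
          ⟨(hmem x (by simp [hx])).1, hL x hx⟩
        match R with
        | [] =>
          have : L.length < m' + 2 := by
            apply h₁cup L ⟨by simpa using hcup.1, ?_⟩ hLmem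
            have := hcup.2
            rw [List.append_nil] at this
            rwa [slopes_congr (f := f₁) (g := g) (fun x hx => (hgl x (hL x hx)).symm)]
          simpa using (by omega : L.length + 0 < m' + 1 + 2)
        | [b] =>
          rcases L.eq_nil_or_concat with rfl | ⟨L', a, rfl⟩
          · simp
          · simp only [List.concat_eq_append] at hL hLmem hcup hmem ⊢
            have hslopes := slopes_append g a L' [] b
            have hsortL : List.Pairwise (· < ·) (slopes g (L' ++ [a])) := by
              have := hcup.2
              rw [hslopes] at this
              exact (List.pairwise_append.mp this).1
            have : (L' ++ [a]).length < m' + 2 := by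
              apply h₁cup (L' ++ [a]) ⟨(List.pairwise_append.mp hcup.1).1, ?_⟩
                (fun x hx => hLmem x hx)
              rwa [slopes_congr (f := f₁) (g := g)
                (fun x hx => (hgl x (hL x hx)).symm)]
            simp only [List.length_append, List.length_cons, List.length_nil] at this ⊢
            omega
        | b1 :: b2 :: R' =>
          rcases L.eq_nil_or_concat with rfl | ⟨L', a, rfl⟩
          · -- pure right part: a cup of f₂
            have hmap : (List.map (· - N₁) (b1 :: b2 :: R')).length < m' + 1 + 2 := by
              apply h₂cup _ ⟨map_sub_sorted (by simpa using hcup.1) hR, ?_⟩ ?_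
              · rw [← slopes_shift hgr hR]
                simpa using hcup.2
              · intro x hx
                simp only [List.mem_map] at hx
                obtain ⟨y, hy, rfl⟩ := hx
                have h1 := hR y hy
                have h2 := (hmem y (by simp [hy])).2
                omega
            simp only [List.length_map] at hmap
            simpa using hmap
          · -- mixed: bridge slope exceeds internal slope
            exfalso
            simp only [List.concat_eq_append] at hL hLmem hcup hmem ⊢
            have hslopes := slopes_append g a L' (b2 :: R') b1
            have hsorted := hcup.2
            rw [hslopes] at hsorted
            have hbr : slope g a b1 < slope g b1 b2 := by
              have h2 := (List.pairwise_append.mp hsorted).2.1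
              simp only [slopes_cons₂] at h2
              exact List.rel_of_pairwise_cons h2 (by simp)
            have ha1 : 1 ≤ a := (hLmem a (by simp)).1
            have ha2 : a ≤ N₁ := (hLmem a (by simp)).2
            have hb1 : N₁ < b1 := hR b1 (by simp)
            have hb1N : b1 ≤ N := (hmem b1 (by simp)).2
            have hb2N : b2 ≤ N := (hmem b2 (by simp)).2
            have hb12 : b1 < b2 := by
              have := (List.pairwise_append.mp hcup.1).2.1
              exact List.rel_of_pairwise_cons this (by simp)
            have hX := hcross a b1 ha1 ha2 hb1 hb1N
            have hY := hintR b1 b2 hb1 hb2N hb12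
            rw [abs_le] at hY
            linarith [hY.2]
      · -- NoCap
        intro xs hcap hmem
        obtain ⟨L, R, rfl, hL, hR⟩ := sorted_split (N₁ := N₁) hcap.1
        have hLmem : ∀ x ∈ L, 1 ≤ x ∧ x ≤ N₁ := fun x hx =>
          ⟨(hmem x (by simp [hx])).1, hL x hx⟩
        have hRmem : ∀ x ∈ List.map (· - N₁) R, 1 ≤ x ∧ x ≤ N₂ := by
          intro x hx
          simp only [List.mem_map] at hx
          obtain ⟨y, hy, rfl⟩ := hx
          have h1 := hR y hy
          have h2 := (hmem y (by simp [hy])).2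
          omega
        match R with
        | [] =>
          have : L.length < n' + 1 + 2 := by
            apply h₁cap L ⟨by simpa using hcap.1, ?_⟩ hLmem
            have := hcap.2
            rw [List.append_nil] at this
            rwa [slopes_congr (f := f₁) (g := g) (fun x hx => (hgl x (hL x hx)).symm)]
          simpa using this
        | b :: R' =>
          rcases L.eq_nil_or_concat with rfl | ⟨L₀, a2, rfl⟩
          · -- pure right part : a cap of f₂
            have hmap : (List.map (· - N₁) (b :: R')).length < n' + 2 := by
              apply h₂cap _ ⟨map_sub_sorted (by simpa using hcap.1) hR, ?_⟩ hRmem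
              rw [← slopes_shift hgr hR]
              simpa using hcap.2
            simp only [List.length_map] at hmap
            simp only [List.nil_append, List.length_cons] at hmap ⊢
            omega
          · rcases L₀.eq_nil_or_concat with rfl | ⟨L₁, a1, rfl⟩
            · -- single left point
              simp only [List.concat_eq_append, List.nil_append] at hL hLmem hcap hmem ⊢
              have hmap : (List.map (· - N₁) (b :: R')).length < n' + 2 := by
                apply h₂cap _ ⟨map_sub_sorted ((by simpa using hcap.1 : List.Pairwise (· < ·) (a2 :: b :: R')).of_cons) hR, ?_⟩ hRmem
                rw [← slopes_shift hgr hR]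
                have := hcap.2
                have hxs : [a2] ++ b :: R' = a2 :: b :: R' := by simp
                rw [hxs, slopes_cons₂] at this
                exact this.of_cons
              simp only [List.length_map, List.length_cons] at hmap
              simp only [List.length_append, List.length_cons, List.length_nil]
              omega
            · -- two left points: contradiction with the huge bridge slope
              exfalso
              simp only [List.concat_eq_append] at hL hLmem hcap hmem
              have hsl1 := slopes_append g a2 (L₁ ++ [a1]) R' b
              have hsl2 := slopes_append g a1 L₁ [] a2
              have hsorted := hcap.2
              rw [hsl1, hsl2] at hsorted
              have hge : slope g a1 a2 ≥ slope g a2 b := by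
                have := (List.pairwise_append.mp hsorted).2.2
                exact this (slope g a1 a2) (by simp) (slope g a2 b) (by simp)
              have ha1a2 : a1 < a2 := by
                have hp := (List.pairwise_append.mp hcap.1).1
                exact (List.pairwise_append.mp hp).2.2 a1 (by simp) a2 (by simp)
              have h1a1 : 1 ≤ a1 := (hLmem a1 (by simp)).1
              have ha2N : a2 ≤ N₁ := (hLmem a2 (by simp)).2
              have hbN : b ≤ N := (hmem b (by simp)).2
              have hNb : N₁ < b := hR b (by simp)
              have hX := hcross a2 b (by omega) ha2N hNb hbN
              have hY := hintL a1 a2 h1a1 ha2N ha1a2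
              rw [abs_le] at hY
              linarith [hY.2]


/-! ### Cross products and transitivity -/

def cross (f : ℕ → ℚ) (a b c : ℕ) : ℚ :=
  ((b:ℚ) - a) * (f c - f a) - (f b - f a) * ((c:ℚ) - a)

lemma slope_lt_iff_cross {f : ℕ → ℚ} {a b c : ℕ} (hab : a < b) (hbc : b < c) :
    slope f a b < slope f b c ↔ 0 < cross f a b c := by
  have d1 : (0:ℚ) < (b:ℚ) - a := by
    have : (a:ℚ) < b := by exact_mod_cast hab
    linarith
  have d2 : (0:ℚ) < (c:ℚ) - b := by
    have : (b:ℚ) < c := by exact_mod_cast hbc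
    linarith
  rw [slope, slope, div_lt_div_iff₀ d1 d2]
  have hcr : cross f a b c = (f c - f b) * ((b:ℚ) - a) - (f b - f a) * ((c:ℚ) - b) := by
    rw [cross]; ring
  constructor <;> intro h <;> [skip; rw [hcr] at h] <;> [rw [hcr]; skip] <;> linarith

lemma trans_red {f : ℕ → ℚ} {x1 x2 x3 x4 : ℕ} (h12 : x1 < x2) (h23 : x2 < x3) (h34 : x3 < x4)
    (hA : slope f x1 x2 < slope f x2 x3) (hB : slope f x2 x3 < slope f x3 x4) :
    slope f x1 x2 < slope f x2 x4 ∧ slope f x1 x3 < slope f x3 x4 := by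
  rw [slope_lt_iff_cross h12 h23] at hA
  rw [slope_lt_iff_cross h23 h34] at hB
  rw [slope_lt_iff_cross h12 (lt_trans h23 h34), slope_lt_iff_cross (lt_trans h12 h23) h34]
  have d21 : (0:ℚ) < (x2:ℚ) - x1 := by
    have : (x1:ℚ) < x2 := by exact_mod_cast h12
    linarith
  have d32 : (0:ℚ) < (x3:ℚ) - x2 := by
    have : (x2:ℚ) < x3 := by exact_mod_cast h23
    linarith
  have d43 : (0:ℚ) < (x4:ℚ) - x3 := by
    have : (x3:ℚ) < x4 := by exact_mod_cast h34
    linarith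
  have e1 : cross f x1 x2 x4 * ((x3:ℚ) - x2)
      = cross f x1 x2 x3 * ((x4:ℚ) - x2) + cross f x2 x3 x4 * ((x2:ℚ) - x1) := by
    simp only [cross]; ring
  have e2 : cross f x1 x3 x4 * ((x3:ℚ) - x2)
      = cross f x1 x2 x3 * ((x4:ℚ) - x3) + cross f x2 x3 x4 * ((x3:ℚ) - x1) := by
    simp only [cross]; ring
  constructor
  · nlinarith [mul_pos hA (by linarith : (0:ℚ) < (x4:ℚ) - x2), mul_pos hB d21]
  · nlinarith [mul_pos hA d43, mul_pos hB (by linarith : (0:ℚ) < (x3:ℚ) - x1)]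

lemma trans_blue {f : ℕ → ℚ} {x1 x2 x3 x4 : ℕ} (h12 : x1 < x2) (h23 : x2 < x3) (h34 : x3 < x4)
    (hA : ¬ slope f x1 x2 < slope f x2 x3) (hB : ¬ slope f x2 x3 < slope f x3 x4) :
    ¬ slope f x1 x2 < slope f x2 x4 ∧ ¬ slope f x1 x3 < slope f x3 x4 := by
  rw [slope_lt_iff_cross h12 h23, not_lt] at hA
  rw [slope_lt_iff_cross h23 h34, not_lt] at hB
  rw [slope_lt_iff_cross h12 (lt_trans h23 h34), slope_lt_iff_cross (lt_trans h12 h23) h34,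
    not_lt, not_lt]
  have d21 : (0:ℚ) < (x2:ℚ) - x1 := by
    have : (x1:ℚ) < x2 := by exact_mod_cast h12
    linarith
  have d32 : (0:ℚ) < (x3:ℚ) - x2 := by
    have : (x2:ℚ) < x3 := by exact_mod_cast h23
    linarith
  have d43 : (0:ℚ) < (x4:ℚ) - x3 := by
    have : (x3:ℚ) < x4 := by exact_mod_cast h34
    linarith
  have e1 : cross f x1 x2 x4 * ((x3:ℚ) - x2)
      = cross f x1 x2 x3 * ((x4:ℚ) - x2) + cross f x2 x3 x4 * ((x2:ℚ) - x1) := by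
    simp only [cross]; ring
  have e2 : cross f x1 x3 x4 * ((x3:ℚ) - x2)
      = cross f x1 x2 x3 * ((x4:ℚ) - x3) + cross f x2 x3 x4 * ((x3:ℚ) - x1) := by
    simp only [cross]; ring
  constructor
  · nlinarith [mul_nonneg (neg_nonneg.mpr hA) (by linarith : (0:ℚ) ≤ (x4:ℚ) - x2),
      mul_nonneg (neg_nonneg.mpr hB) d21.le]
  · nlinarith [mul_nonneg (neg_nonneg.mpr hA) d43.le,
      mul_nonneg (neg_nonneg.mpr hB) (by linarith : (0:ℚ) ≤ (x3:ℚ) - x1)]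

/-! ### The coloring -/

def color (f : ℕ → ℚ) (T : Finset ℕ) : Bool :=
  match T.sort (· ≤ ·) with
  | [a, b, c] => decide (slope f a b < slope f b c)
  | _ => true

lemma sort_triple {a b c : ℕ} (hab : a < b) (hbc : b < c) :
    ({a, b, c} : Finset ℕ).sort (· ≤ ·) = [a, b, c] := by
  rw [Finset.sort_insert (· ≤ ·) (by intro x hx; simp at hx; omega) (by simp; omega),
      Finset.sort_insert (· ≤ ·) (by intro x hx; simp at hx; omega) (by simp; omega),
      Finset.sort_singleton]

lemma color_triple (f : ℕ → ℚ) {a b c : ℕ} (hab : a < b) (hbc : b < c) :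
    color f {a, b, c} = decide (slope f a b < slope f b c) := by
  rw [color, sort_triple hab hbc]

lemma card_triple {a b c : ℕ} (hab : a < b) (hbc : b < c) :
    ({a, b, c} : Finset ℕ).card = 3 := by
  rw [Finset.card_insert_of_notMem (by simp; omega),
      Finset.card_insert_of_notMem (by simp; omega), Finset.card_singleton]

lemma chain_slopes_lt {f : ℕ → ℚ} :
    ∀ {xs : List ℕ}, List.Pairwise (· < ·) xs →
      (∀ a b c : ℕ, a ∈ xs → b ∈ xs → c ∈ xs → a < b → b < c →
        slope f a b < slope f b c) →
      List.IsChain (· < ·) (slopes f xs)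
  | [], _, _ => List.isChain_nil
  | [_], _, _ => List.isChain_nil
  | [_, _], _, _ => by simp
  | a :: b :: c :: t, hs, h => by
    simp only [slopes_cons₂, List.isChain_cons_cons]
    have hab : a < b := List.rel_of_pairwise_cons hs (by simp)
    have hbc : b < c := List.rel_of_pairwise_cons hs.of_cons (by simp)
    refine ⟨h a b c (by simp) (by simp) (by simp) hab hbc, ?_⟩
    have := chain_slopes_lt (f := f) (xs := b :: c :: t) hs.of_cons
      (fun x y z hx hy hz => h x y z (List.mem_cons_of_mem _ hx)
        (List.mem_cons_of_mem _ hy) (List.mem_cons_of_mem _ hz))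
    simpa using this

lemma chain_slopes_ge {f : ℕ → ℚ} :
    ∀ {xs : List ℕ}, List.Pairwise (· < ·) xs →
      (∀ a b c : ℕ, a ∈ xs → b ∈ xs → c ∈ xs → a < b → b < c →
        ¬ slope f a b < slope f b c) →
      List.IsChain (· ≥ ·) (slopes f xs)
  | [], _, _ => List.isChain_nil
  | [_], _, _ => List.isChain_nil
  | [_, _], _, _ => by simp
  | a :: b :: c :: t, hs, h => by
    simp only [slopes_cons₂, List.isChain_cons_cons]
    have hab : a < b := List.rel_of_pairwise_cons hs (by simp)
    have hbc : b < c := List.rel_of_pairwise_cons hs.of_cons (by simp)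
    refine ⟨le_of_not_gt (h a b c (by simp) (by simp) (by simp) hab hbc), ?_⟩
    have := chain_slopes_ge (f := f) (xs := b :: c :: t) hs.of_cons
      (fun x y z hx hy hz => h x y z (List.mem_cons_of_mem _ hx)
        (List.mem_cons_of_mem _ hy) (List.mem_cons_of_mem _ hz))
    simpa using this

end Stmt5

/-- Sharpness of the combinatorial cups–caps theorem: there is a transitive 2-coloring
of the triples of {1,…,C(k+ℓ-4, k-2)} with no red clique of size k and no blue clique
of size ℓ. (`c T = true` means red, `c T = false` means blue.) -/
theorem stmt_5 (k l : ℕ) (hk : 2 ≤ k) (hl : 2 ≤ l) :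
    ∃ c : Finset ℕ → Bool,
      (∀ i1 i2 i3 i4 : ℕ, 1 ≤ i1 → i1 < i2 → i2 < i3 → i3 < i4 →
        i4 ≤ Nat.choose (k + l - 4) (k - 2) →
        c {i1, i2, i3} = c {i2, i3, i4} →
        c {i1, i2, i4} = c {i1, i2, i3} ∧ c {i1, i3, i4} = c {i1, i2, i3}) ∧
      (¬ ∃ S ⊆ Finset.Icc 1 (Nat.choose (k + l - 4) (k - 2)), S.card = k ∧
          ∀ T ⊆ S, T.card = 3 → c T = true) ∧
      (¬ ∃ S ⊆ Finset.Icc 1 (Nat.choose (k + l - 4) (k - 2)), S.card = l ∧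
          ∀ T ⊆ S, T.card = 3 → c T = false) := by
  classical
  obtain ⟨f, hcup, hcap⟩ := Stmt5.main ((k-2) + (l-2)) (k-2) (l-2) rfl
  have hNeq : ((k-2) + (l-2)).choose (k-2) = (k + l - 4).choose (k - 2) := by
    congr 1; omega
  rw [hNeq] at hcup hcap
  set N := (k + l - 4).choose (k - 2) with hN
  refine ⟨Stmt5.color f, ?_, ?_, ?_⟩
  · -- transitivity
    intro i1 i2 i3 i4 _ h12 h23 h34 _ hcol
    rw [Stmt5.color_triple f h12 h23, Stmt5.color_triple f h23 h34] at hcol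
    rw [Stmt5.color_triple f h12 (lt_trans h23 h34),
        Stmt5.color_triple f (lt_trans h12 h23) h34, Stmt5.color_triple f h12 h23]
    by_cases h1 : Stmt5.slope f i1 i2 < Stmt5.slope f i2 i3
    · have h2 : Stmt5.slope f i2 i3 < Stmt5.slope f i3 i4 := by
        simpa [h1] using hcol.symm
      obtain ⟨p, q⟩ := Stmt5.trans_red h12 h23 h34 h1 h2
      simp [h1, p, q]
    · have h2 : ¬ Stmt5.slope f i2 i3 < Stmt5.slope f i3 i4 := by
        simpa [h1] using hcol.symm
      obtain ⟨p, q⟩ := Stmt5.trans_blue h12 h23 h34 h1 h2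
      simp [h1, p, q]
  · -- no red clique
    rintro ⟨S, hS, hcard, hred⟩
    set xs := S.sort (· ≤ ·) with hxs
    have hsorted : List.Pairwise (· < ·) xs := (Finset.sortedLT_sort S).pairwise
    have hmemS : ∀ x ∈ xs, x ∈ S := fun x hx => (Finset.mem_sort _).mp hx
    have htriple : ∀ a b c : ℕ, a ∈ xs → b ∈ xs → c ∈ xs → a < b → b < c →
        Stmt5.slope f a b < Stmt5.slope f b c := by
      intro a b c ha hb hc hab hbc
      have hsub : ({a, b, c} : Finset ℕ) ⊆ S := by
        intro x hx
        simp only [Finset.mem_insert, Finset.mem_singleton] at hx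
        rcases hx with rfl | rfl | rfl
        exacts [hmemS _ ha, hmemS _ hb, hmemS _ hc]
      have := hred _ hsub (Stmt5.card_triple hab hbc)
      rw [Stmt5.color_triple f hab hbc] at this
      exact of_decide_eq_true this
    have hcupxs : Stmt5.IsCup f xs :=
      ⟨hsorted, List.isChain_iff_pairwise.mp (Stmt5.chain_slopes_lt hsorted htriple)⟩
    have hlen := hcup xs hcupxs (fun x hx => by
      have := hS (hmemS x hx)
      rw [Finset.mem_Icc] at this
      exact this)
    rw [hxs, Finset.length_sort, hcard] at hlen
    omega
  · -- no blue clique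
    rintro ⟨S, hS, hcard, hblue⟩
    set xs := S.sort (· ≤ ·) with hxs
    have hsorted : List.Pairwise (· < ·) xs := (Finset.sortedLT_sort S).pairwise
    have hmemS : ∀ x ∈ xs, x ∈ S := fun x hx => (Finset.mem_sort _).mp hx
    have htriple : ∀ a b c : ℕ, a ∈ xs → b ∈ xs → c ∈ xs → a < b → b < c →
        ¬ Stmt5.slope f a b < Stmt5.slope f b c := by
      intro a b c ha hb hc hab hbc
      have hsub : ({a, b, c} : Finset ℕ) ⊆ S := by
        intro x hx
        simp only [Finset.mem_insert, Finset.mem_singleton] at hx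
        rcases hx with rfl | rfl | rfl
        exacts [hmemS _ ha, hmemS _ hb, hmemS _ hc]
      have := hblue _ hsub (Stmt5.card_triple hab hbc)
      rw [Stmt5.color_triple f hab hbc] at this
      simpa using this
    have hcapxs : Stmt5.IsCap f xs :=
      ⟨hsorted, List.isChain_iff_pairwise.mp (Stmt5.chain_slopes_ge hsorted htriple)⟩
    have hlen := hcap xs hcapxs (fun x hx => by
      have := hS (hmemS x hx)
      rw [Finset.mem_Icc] at this
      exact this)
    rw [hxs, Finset.length_sort, hcard] at hlen
    omega
end

section
/- Let X = {x_1, ..., x_k} be a k-cap (points in convex position bounded below by a single edge, ordered left to right), and let T_1, ..., T_{k-1} be the regions of its support, where T_i is the region outside conv(X) bounded by the segment x_i x_{i+1} and the lines x_{i-1}x_i and x_{i+1}x_{i+2}. Then any (k-1)-tuple of points obtained by selecting one point from each region T_i, i = 1, ..., k-1, is in convex position. -/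
/-- For a k-cap `f 0, …, f (k-1)` (ordered left to right, indices cyclic mod k),
the i-th support region: the open region outside the hull, above the edge
`f i f (i+1)` and below the lines through the neighboring edges. -/
def capRegion (k : ℕ) (f : ℕ → ℝ × ℝ) (i : ℕ) : Set (ℝ × ℝ) :=
  {p | 0 < det2 (f i) (f ((i + 1) % k)) p ∧
       det2 (f ((i + k - 1) % k)) (f i) p < 0 ∧
       det2 (f ((i + 1) % k)) (f ((i + 2) % k)) p < 0}

/-- For a k-cup `f 0, …, f (k-1)` (ordered left to right, indices cyclic mod k),
the i-th support region: the open region outside the hull, below the edge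
`f i f (i+1)` and above the lines through the neighboring edges. -/
def cupRegion (k : ℕ) (f : ℕ → ℝ × ℝ) (i : ℕ) : Set (ℝ × ℝ) :=
  {p | det2 (f i) (f ((i + 1) % k)) p < 0 ∧
       0 < det2 (f ((i + k - 1) % k)) (f i) p ∧
       0 < det2 (f ((i + 1) % k)) (f ((i + 2) % k)) p}

lemma det2_identity (a b c p : ℝ × ℝ) :
    (b.1 - a.1) * det2 b c p
      = (c.1 - b.1) * det2 a b p - (p.1 - b.1) * det2 a b c := by
  simp only [det2]; ring

lemma stepR {a b c p : ℝ × ℝ} (hab : a.1 < b.1) (hbc : b.1 < c.1)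
    (habc : det2 a b c < 0) (hp : p.1 < b.1) (h : det2 a b p < 0) :
    det2 b c p < 0 := by
  have hid := det2_identity a b c p
  have h1 : (b.1 - a.1) * det2 b c p < 0 := by nlinarith
  by_contra hcon
  push_neg at hcon
  nlinarith [mul_nonneg (le_of_lt (sub_pos.mpr hab)) hcon]

lemma stepL {a b c p : ℝ × ℝ} (hab : a.1 < b.1) (hbc : b.1 < c.1)
    (habc : det2 a b c < 0) (hp : b.1 < p.1) (h : det2 b c p < 0) :
    det2 a b p < 0 := by
  have hid := det2_identity a b c p
  have h1 : (c.1 - b.1) * det2 a b p < 0 := by nlinarith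
  by_contra hcon
  push_neg at hcon
  nlinarith [mul_nonneg (le_of_lt (sub_pos.mpr hbc)) hcon]

lemma xlt {a b c p : ℝ × ℝ} (hab : a.1 < b.1) (hbc : b.1 < c.1)
    (habc : det2 a b c < 0) (hA : 0 < det2 a b p) (hC : det2 b c p < 0) :
    p.1 < b.1 := by
  have hid := det2_identity a b c p
  by_contra hcon
  push_neg at hcon
  nlinarith [mul_nonneg (sub_nonneg.mpr hcon) (le_of_lt (neg_pos.mpr habc))]

lemma xgt {a b c p : ℝ × ℝ} (hab : a.1 < b.1) (hbc : b.1 < c.1)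
    (habc : det2 a b c < 0) (hB : det2 a b p < 0) (hA : 0 < det2 b c p) :
    b.1 < p.1 := by
  have hid := det2_identity a b c p
  by_contra hcon
  push_neg at hcon
  nlinarith [mul_nonneg (sub_nonneg.mpr hcon) (le_of_lt (neg_pos.mpr habc))]

lemma convex_det2 (a b : ℝ × ℝ) : Convex ℝ {p : ℝ × ℝ | det2 a b p < 0} := by
  intro p hp q hq s t hs ht hst
  simp only [Set.mem_setOf_eq] at hp hq ⊢
  have key : det2 a b (s • p + t • q) = s * det2 a b p + t * det2 a b q := by
    simp only [det2, Prod.fst_add, Prod.snd_add, Prod.smul_fst, Prod.smul_snd, smul_eq_mul]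
    linear_combination ((b.1 - a.1) * a.2 - (b.2 - a.2) * a.1) * hst
  rw [key]
  rcases eq_or_lt_of_le hs with h | h
  · have hst1 : t = 1 := by linarith
    rw [← h, hst1]; simpa using hq
  · nlinarith [mul_nonneg ht (le_of_lt (neg_pos.mpr hq))]

/-- Selecting one point from each of the first k-1 support regions of a k-cap
always yields a (k-1)-point set in convex position. -/
theorem stmt_7 (k : ℕ) (hk : 3 ≤ k) (f : ℕ → ℝ × ℝ) (hcap : IsCapSeq k f)
    (g : ℕ → ℝ × ℝ) (hg : ∀ i < k - 1, g i ∈ capRegion k f i) :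
    ConvexPos {p : ℝ × ℝ | ∃ i < k - 1, g i = p} := by
  obtain ⟨hx, hs⟩ := hcap
  -- consecutive triples turn clockwise
  have htrip : ∀ m, m + 2 < k → det2 (f m) (f (m + 1)) (f (m + 2)) < 0 := by
    intro m hm
    have h1 : (f m).1 < (f (m + 1)).1 := hx m (m + 1) (by omega) (by omega)
    have h2 : (f (m + 1)).1 < (f (m + 2)).1 := hx (m + 1) (m + 2) (by omega) hm
    have hsl := hs m hm
    rw [slope2, slope2, div_lt_div_iff₀ (by linarith) (by linarith)] at hsl
    simp only [det2]
    nlinarith [hsl]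
  have hA : ∀ j, j < k - 1 → 0 < det2 (f j) (f (j + 1)) (g j) := by
    intro j hj
    have h := (hg j hj).1
    rwa [Nat.mod_eq_of_lt (by omega)] at h
  have hB : ∀ j, 1 ≤ j → j < k - 1 → det2 (f (j - 1)) (f j) (g j) < 0 := by
    intro j h1 hj
    have h := (hg j hj).2.1
    rwa [show j + k - 1 = (j - 1) + k by omega, Nat.add_mod_right,
      Nat.mod_eq_of_lt (by omega)] at h
  have hC : ∀ j, j + 2 < k → j < k - 1 → det2 (f (j + 1)) (f (j + 2)) (g j) < 0 := by
    intro j h2 hj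
    have h := (hg j hj).2.2
    rwa [Nat.mod_eq_of_lt (by omega), Nat.mod_eq_of_lt h2] at h
  have hxlt : ∀ j, j + 2 < k → j < k - 1 → (g j).1 < (f (j + 1)).1 := by
    intro j h2 hj
    exact xlt (hx j (j + 1) (by omega) (by omega)) (hx (j + 1) (j + 2) (by omega) h2)
      (htrip j h2) (hA j hj) (hC j h2 hj)
  have hxgt : ∀ j, 1 ≤ j → j < k - 1 → (f j).1 < (g j).1 := by
    intro j h1 hj
    have ht := htrip (j - 1) (by omega)
    rw [show j - 1 + 1 = j by omega, show j - 1 + 2 = j + 1 by omega] at ht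
    exact xgt (hx (j - 1) j (by omega) (by omega)) (hx j (j + 1) (by omega) (by omega))
      ht (hB j h1 hj) (hA j hj)
  -- every other selected point is strictly below the line through edge i
  have hmain : ∀ i j, i < k - 1 → j < k - 1 → i ≠ j →
      det2 (f i) (f (i + 1)) (g j) < 0 := by
    intro i j hik hjk hne
    rcases lt_or_gt_of_ne hne with hij | hij
    · -- i < j : propagate leftwards from the edge j-1
      have Hl : ∀ d m, m + 1 + d = j → det2 (f m) (f (m + 1)) (g j) < 0 := by
        intro d
        induction d with
        | zero =>
          intro m hm
          have h := hB j (by omega) hjk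
          rw [show j - 1 = m by omega] at h
          rw [show m + 1 = j by omega]
          exact h
        | succ d ih =>
          intro m hm
          have prev := ih (m + 1) (by omega)
          exact stepL (hx m (m + 1) (by omega) (by omega))
            (hx (m + 1) (m + 2) (by omega) (by omega))
            (htrip m (by omega))
            (lt_trans (hx (m + 1) j (by omega) (by omega)) (hxgt j (by omega) hjk))
            prev
      exact Hl (j - i - 1) i (by omega)
    · -- j < i : propagate rightwards from the edge j+1
      have Hr : ∀ m, j < m → m < k - 1 → det2 (f m) (f (m + 1)) (g j) < 0 := by
        intro m
        induction m with
        | zero => omega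
        | succ n ih =>
          intro hjm hmk
          rcases eq_or_lt_of_le (Nat.lt_succ_iff.mp hjm) with h | h
          · rw [← h]
            exact hC j (by omega) hjk
          · exact stepR (hx n (n + 1) (by omega) (by omega))
              (hx (n + 1) (n + 2) (by omega) (by omega))
              (htrip n (by omega))
              (lt_trans (hxlt j (by omega) hjk) (hx (j + 1) (n + 1) (by omega) (by omega)))
              (ih h (by omega))
      exact Hr i hij hik
  intro p hp
  obtain ⟨i, hik, rfl⟩ := hp
  intro hmem
  have hsub : ({q : ℝ × ℝ | ∃ j < k - 1, g j = q} \ {g i})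
      ⊆ {q : ℝ × ℝ | det2 (f i) (f (i + 1)) q < 0} := by
    rintro q ⟨⟨j, hjk, rfl⟩, hq⟩
    have hne : i ≠ j := by
      rintro rfl
      exact hq rfl
    exact hmain i j hik hjk hne
  have hmem' := convexHull_min hsub (convex_det2 _ _) hmem
  simp only [Set.mem_setOf_eq] at hmem'
  exact absurd hmem' (not_lt.mpr (le_of_lt (hA i hik)))
end

section
/- Let S_1, ..., S_t be finite planar point sets such that each S_r is a cap, and for each r, for every pair of points p, q ∈ S_r, the line through p and q has all points of S_1 ∪ ... ∪ S_t other than p and q strictly on one side (below it). Then S_1 ∪ ... ∪ S_t is a cap, and hence in convex position. -/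
/-- A finite planar set is a cap if it is in convex position and every point has a
(non-vertical) line through it with all other points of the set strictly below. -/
def CapSet (S : Finset (ℝ × ℝ)) : Prop :=
  ConvexPos (S : Set (ℝ × ℝ)) ∧
  ∀ p ∈ S, ∃ m c : ℝ, p.2 = m * p.1 + c ∧ ∀ q ∈ S, q ≠ p → q.2 < m * q.1 + c

/-- If every point of a finite set has a line through it with all other points strictly
below, then the set is in convex position. -/
lemma capline_convexPos (T : Finset (ℝ × ℝ))
    (h : ∀ p ∈ T, ∃ m c : ℝ, p.2 = m * p.1 + c ∧ ∀ q ∈ T, q ≠ p → q.2 < m * q.1 + c) :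
    ConvexPos (T : Set (ℝ × ℝ)) := by
  intro p hp hmem
  obtain ⟨m, c, hpc, hlt⟩ := h p hp
  have hlin : IsLinearMap ℝ (fun x : ℝ × ℝ => x.2 - m * x.1) := by
    constructor
    · intro x y; simp [Prod.fst_add, Prod.snd_add]; ring
    · intro a x; simp [Prod.smul_fst, Prod.smul_snd, smul_eq_mul]; ring
  have hconv : Convex ℝ {x : ℝ × ℝ | x.2 - m * x.1 < c} := convex_halfSpace_lt hlin c
  have hsub : ((T : Set (ℝ × ℝ)) \ {p}) ⊆ {x : ℝ × ℝ | x.2 - m * x.1 < c} := by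
    rintro z ⟨hz, hzp⟩
    have hz' : z ∈ T := hz
    have hne : z ≠ p := by simpa using hzp
    have := hlt z hz' hne
    simp only [Set.mem_setOf_eq]
    linarith
  have hmem' := convexHull_min hsub hconv hmem
  simp only [Set.mem_setOf_eq] at hmem'
  linarith

/-- If each S_r is a cap (with at least two points) and for every pair of points of
the same S_r the line through them has all other points of the union strictly below,
then the union of the S_r is a cap, hence in convex position. -/
theorem stmt_12 (t : ℕ) (S : ℕ → Finset (ℝ × ℝ))
    (hcap : ∀ r < t, CapSet (S r))
    (h2 : ∀ r < t, 2 ≤ (S r).card)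
    (hline : ∀ r < t, ∀ p ∈ S r, ∀ q ∈ S r, p ≠ q →
      ∃ m c : ℝ, p.2 = m * p.1 + c ∧ q.2 = m * q.1 + c ∧
        ∀ s < t, ∀ z ∈ S s, z ≠ p → z ≠ q → z.2 < m * z.1 + c) :
    CapSet ((Finset.range t).biUnion S) ∧
    ConvexPos (((Finset.range t).biUnion S : Finset (ℝ × ℝ)) : Set (ℝ × ℝ)) := by
  set T := (Finset.range t).biUnion S with hT
  have key : ∀ p ∈ T, ∃ m c : ℝ, p.2 = m * p.1 + c ∧
      ∀ z ∈ T, z ≠ p → z.2 < m * z.1 + c := by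
    intro p hp
    have hp' := hp
    simp only [hT, Finset.mem_biUnion, Finset.mem_range] at hp'
    obtain ⟨r, hr, hpr⟩ := hp'
    obtain ⟨q, hq, hqp⟩ :=
      Finset.exists_mem_ne (lt_of_lt_of_le one_lt_two (h2 r hr)) p
    obtain ⟨m1, c1, hp1, hlt1⟩ := (hcap r hr).2 p hpr
    obtain ⟨m2, c2, hp2, hq2, hlt2⟩ := hline r hr p hpr q hq (Ne.symm hqp)
    have hbelow : ∀ z ∈ T, z ≠ p → z ≠ q → z.2 < m2 * z.1 + c2 := by
      intro z hz hzp hzq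
      simp only [hT, Finset.mem_biUnion, Finset.mem_range] at hz
      obtain ⟨s, hs, hzs⟩ := hz
      exact hlt2 s hs z hzs hzp hzq
    set D : ℝ × ℝ → ℝ := fun z => (m2 * z.1 + c2) - (m1 * z.1 + c1) with hD
    set g : ℝ × ℝ → ℝ := fun z => ((m2 * z.1 + c2) - z.2) / (2 * max (D z) 1) with hg
    set E : Finset ℝ := insert (1 : ℝ) ((T \ {p, q}).image g) with hE
    have hEne : E.Nonempty := ⟨1, Finset.mem_insert_self _ _⟩
    set l := E.min' hEne with hl
    have hlg : ∀ z ∈ T \ ({p, q} : Finset (ℝ × ℝ)), l ≤ g z := fun z hz =>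
      Finset.min'_le _ _ (Finset.mem_insert_of_mem (Finset.mem_image_of_mem g hz))
    have hlpos : 0 < l := by
      have hmem : l ∈ E := Finset.min'_mem _ _
      rw [hE] at hmem
      simp only [Finset.mem_insert, Finset.mem_image] at hmem
      rcases hmem with h1 | ⟨z, hz, hgz⟩
      · rw [h1]; norm_num
      · rw [← hgz, hg]
        have hzT : z ∈ T := (Finset.mem_sdiff.mp hz).1
        have hzpq := (Finset.mem_sdiff.mp hz).2
        simp only [Finset.mem_insert, Finset.mem_singleton, not_or] at hzpq
        have hbz := hbelow z hzT hzpq.1 hzpq.2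
        have hM : (1 : ℝ) ≤ max (D z) 1 := le_max_right _ _
        exact div_pos (by linarith) (by linarith)
    refine ⟨m2 + l * (m1 - m2), c2 + l * (c1 - c2), by linear_combination (1 - l) * hp2 + l * hp1, ?_⟩
    intro z hz hzp
    by_cases hzq : z = q
    · subst hzq
      have hq1 : z.2 < m1 * z.1 + c1 := hlt1 z hq hzp
      nlinarith [mul_pos hlpos (show (0:ℝ) < m1 * z.1 + c1 - z.2 by linarith)]
    · have hzmem : z ∈ T \ ({p, q} : Finset (ℝ × ℝ)) := by
        simp only [Finset.mem_sdiff, Finset.mem_insert, Finset.mem_singleton, not_or]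
        exact ⟨hz, hzp, hzq⟩
      have hbz := hbelow z hz hzp hzq
      have hlgz := hlg z hzmem
      have hMpos : (0 : ℝ) < 2 * max (D z) 1 := by
        have : (1 : ℝ) ≤ max (D z) 1 := le_max_right _ _
        linarith
      have hkey : l * (2 * max (D z) 1) ≤ (m2 * z.1 + c2) - z.2 := by
        rw [hg] at hlgz
        exact (le_div_iff₀ hMpos).mp hlgz
      have hDM : D z ≤ max (D z) 1 := le_max_left _ _
      have h1M : (1 : ℝ) ≤ max (D z) 1 := le_max_right _ _
      have hlD : l * D z ≤ l * max (D z) 1 := mul_le_mul_of_nonneg_left hDM hlpos.le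
      have hlM : l * 1 ≤ l * max (D z) 1 := mul_le_mul_of_nonneg_left h1M hlpos.le
      have hfin : l * D z < (m2 * z.1 + c2) - z.2 := by nlinarith
      rw [hD] at hfin
      simp only at hfin
      nlinarith [hfin]
  exact ⟨⟨capline_convexPos T key, key⟩, capline_convexPos T key⟩
end
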